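/- arXiv:1510.06449 — 9 statements merged into one kernel-verified Lean document; each statement's English description precedes it below -/
import Mathlib

section
/- Let α > 0 and β > 1, and let Ω(α,β) := ⋃_{j=1}^∞ (j^α, j^α + j^{-β}) ⊆ ℝ. Then |Ω(α,β)| < ∞, and with D := (1-(α+β))/α one has V_{Ω(α,β)}(t)/t^{1+D} → 1/(β-1) as t → +∞. In particular, Ω(α,β) is Minkowski measurable at infinity with dim_B(∞,Ω(α,β)) = D and M^D(∞,Ω(α,β)) = 1/(β-1). -/
open MeasureTheory Filter
open scoped Topology ENNReal

/-- MVT-based bounds for differences of rpow. -/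
lemma rpow_diff_bounds (β : ℝ) (hβ : 1 < β) {x : ℝ} (hx : 0 < x) :
    (β - 1) * (x+1) ^ (-β) ≤ x ^ (1-β) - (x+1) ^ (1-β) ∧
    x ^ (1-β) - (x+1) ^ (1-β) ≤ (β - 1) * x ^ (-β) := by
  have hd : ∀ y ∈ Set.Ioo x (x+1), HasDerivAt (fun z : ℝ => z ^ (1-β))
      ((1-β) * y ^ (-β)) y := by
    intro y hy
    have hy0 : y ≠ 0 := by have := hx.trans hy.1; linarith
    have := Real.hasDerivAt_rpow_const (x := y) (p := 1-β) (Or.inl hy0)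
    convert this using 2
    ring_nf
  have hc : ContinuousOn (fun z : ℝ => z ^ (1-β)) (Set.Icc x (x+1)) := by
    intro y hy
    have hy0 : y ≠ 0 := by have := hx.trans_le hy.1; linarith
    exact ((Real.hasDerivAt_rpow_const (x := y) (p := 1-β) (Or.inl hy0)).continuousAt).continuousWithinAt
  obtain ⟨c, hc1, hc2⟩ := exists_hasDerivAt_eq_slope (fun z : ℝ => z ^ (1-β))
    (fun y => (1-β) * y ^ (-β)) (by linarith : x < x + 1) hc hd
  have hslope : (1-β) * c ^ (-β) = (x+1) ^ (1-β) - x ^ (1-β) := by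
    rw [hc2]; field_simp; ring
  have hkey : x ^ (1-β) - (x+1) ^ (1-β) = (β - 1) * c ^ (-β) := by linarith
  have hcpos : 0 < c := hx.trans hc1.1
  have h1 : c ^ (-β) ≤ x ^ (-β) :=
    Real.rpow_le_rpow_of_nonpos hx hc1.1.le (by linarith)
  have h2 : (x+1) ^ (-β) ≤ c ^ (-β) :=
    Real.rpow_le_rpow_of_nonpos hcpos hc1.2.le (by linarith)
  constructor
  · rw [hkey]; nlinarith
  · rw [hkey]; nlinarith

lemma summable_ell (β : ℝ) (hβ : 1 < β) :
    Summable (fun j : ℕ => ((j:ℝ)+1) ^ (-β)) := by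
  have h0 : Summable (fun n : ℕ => (n:ℝ) ^ (-β)) :=
    Real.summable_nat_rpow.mpr (by linarith)
  have h2 := (summable_nat_add_iff (f := fun n : ℕ => (n:ℝ) ^ (-β)) 1).mpr h0
  refine h2.congr fun n => ?_
  push_cast; ring_nf

lemma summable_ell_shift (β : ℝ) (hβ : 1 < β) (n : ℕ) :
    Summable (fun k : ℕ => ((n:ℝ)+(k:ℝ)+1) ^ (-β)) := by
  have h := (summable_nat_add_iff (f := fun j : ℕ => ((j:ℝ)+1) ^ (-β)) n).mpr
    (summable_ell β hβ)
  refine h.congr fun k => ?_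
  push_cast; ring_nf

lemma hasSum_rpow_telescope (β : ℝ) (hβ : 1 < β) (a : ℝ) (ha : 0 < a) :
    HasSum (fun k : ℕ => (a + (k:ℝ)) ^ (1-β) - (a + ((k:ℝ)+1)) ^ (1-β)) (a ^ (1-β)) := by
  have hnonneg : ∀ k : ℕ, 0 ≤ (a + (k:ℝ)) ^ (1-β) - (a + ((k:ℝ)+1)) ^ (1-β) := by
    intro k
    have h1 : 0 < a + (k:ℝ) := by positivity
    have := Real.rpow_le_rpow_of_nonpos h1 (by linarith : a + (k:ℝ) ≤ a + ((k:ℝ)+1))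
      (by linarith : 1 - β ≤ 0)
    linarith
  rw [hasSum_iff_tendsto_nat_of_nonneg hnonneg]
  have hps : ∀ K : ℕ, ∑ i ∈ Finset.range K,
      ((a + (i:ℝ)) ^ (1-β) - (a + ((i:ℝ)+1)) ^ (1-β))
      = a ^ (1-β) - (a + (K:ℝ)) ^ (1-β) := by
    intro K
    have := Finset.sum_range_sub' (f := fun i : ℕ => (a + (i:ℝ)) ^ (1-β)) K
    simpa [Nat.cast_add, Nat.cast_one, add_assoc] using this
  simp only [hps]
  have htail : Tendsto (fun K : ℕ => (a + (K:ℝ)) ^ (1-β)) atTop (𝓝 0) := by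
    have hb : Tendsto (fun K : ℕ => a + (K:ℝ)) atTop atTop :=
      tendsto_atTop_add_const_left _ _ tendsto_natCast_atTop_atTop
    have h0 : Tendsto (fun x : ℝ => x ^ (-(β-1))) atTop (𝓝 0) :=
      tendsto_rpow_neg_atTop (by linarith)
    have := h0.comp hb
    simpa [neg_sub, Function.comp_def] using this
  have := Filter.Tendsto.const_sub (a ^ (1-β)) htail
  simpa using this

lemma tail_le (β : ℝ) (hβ : 1 < β) (n : ℕ) (hn : 1 ≤ n) :
    ∑' k : ℕ, ((n:ℝ)+(k:ℝ)+1) ^ (-β) ≤ (n:ℝ) ^ (1-β) / (β-1) := by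
  have ha : (0:ℝ) < n := by exact_mod_cast hn
  have htel := hasSum_rpow_telescope β hβ (n:ℝ) ha
  have hdiv := htel.div_const (β-1)
  calc ∑' k : ℕ, ((n:ℝ)+(k:ℝ)+1) ^ (-β)
      ≤ ∑' k : ℕ, (((n:ℝ) + (k:ℝ)) ^ (1-β) - ((n:ℝ) + ((k:ℝ)+1)) ^ (1-β)) / (β-1) := by
        refine Summable.tsum_le_tsum (fun k => ?_) (summable_ell_shift β hβ n) hdiv.summable
        have hx : (0:ℝ) < (n:ℝ) + (k:ℝ) := by positivity
        have h := (rpow_diff_bounds β hβ hx).1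
        rw [le_div_iff₀ (by linarith : (0:ℝ) < β - 1)]
        have e : (n:ℝ) + ((k:ℝ)+1) = ((n:ℝ)+(k:ℝ))+1 := by ring
        rw [e, mul_comm]
        linarith [h]
    _ = (n:ℝ) ^ (1-β) / (β-1) := hdiv.tsum_eq

lemma tail_ge (β : ℝ) (hβ : 1 < β) (n : ℕ) :
    ((n:ℝ)+1) ^ (1-β) / (β-1) ≤ ∑' k : ℕ, ((n:ℝ)+(k:ℝ)+1) ^ (-β) := by
  have ha : (0:ℝ) < (n:ℝ)+1 := by positivity
  have htel := hasSum_rpow_telescope β hβ ((n:ℝ)+1) ha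
  have hdiv := htel.div_const (β-1)
  calc ((n:ℝ)+1) ^ (1-β) / (β-1) = ∑' k : ℕ,
        (((n:ℝ)+1 + (k:ℝ)) ^ (1-β) - ((n:ℝ)+1 + ((k:ℝ)+1)) ^ (1-β)) / (β-1) := hdiv.tsum_eq.symm
    _ ≤ ∑' k : ℕ, ((n:ℝ)+(k:ℝ)+1) ^ (-β) := by
        refine Summable.tsum_le_tsum (fun k => ?_) hdiv.summable (summable_ell_shift β hβ n)
        have hx : (0:ℝ) < (n:ℝ) + (k:ℝ) + 1 := by positivity
        have h := (rpow_diff_bounds β hβ hx).2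
        rw [div_le_iff₀ (by linarith : (0:ℝ) < β - 1)]
        have e1 : (n:ℝ)+1 + (k:ℝ) = ((n:ℝ)+(k:ℝ)+1) := by ring
        have e2 : (n:ℝ)+1 + ((k:ℝ)+1) = ((n:ℝ)+(k:ℝ)+1)+1 := by ring
        rw [e1, e2, mul_comm]
        linarith [h]

lemma gap_lemma (α β : ℝ) (hα : 0 < α) (hβ : 1 < β) :
    ∀ᶠ j : ℕ in atTop, ((j:ℝ)+1) ^ α + ((j:ℝ)+1) ^ (-β) ≤ ((j:ℝ)+2) ^ α := by
  have hev : ∀ᶠ j : ℕ in atTop, 2/α ≤ ((j:ℝ)+1) ^ (α-1+β) := by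
    have h1 : Tendsto (fun j : ℕ => ((j:ℝ)+1)) atTop atTop :=
      tendsto_atTop_add_const_right _ _ tendsto_natCast_atTop_atTop
    exact ((tendsto_rpow_atTop (by linarith : (0:ℝ) < α-1+β)).comp h1).eventually_ge_atTop _
  filter_upwards [hev] with j hj
  have hj1 : (0:ℝ) < (j:ℝ)+1 := by positivity
  have hlt : (j:ℝ)+1 < (j:ℝ)+2 := by linarith
  have hd : ∀ y ∈ Set.Ioo ((j:ℝ)+1) ((j:ℝ)+2),
      HasDerivAt (fun x : ℝ => x ^ α) (α * y ^ (α-1)) y := fun y hy =>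
    Real.hasDerivAt_rpow_const (Or.inl (by have := hj1.trans hy.1; linarith))
  have hc : ContinuousOn (fun x : ℝ => x ^ α) (Set.Icc ((j:ℝ)+1) ((j:ℝ)+2)) := fun y hy =>
    ((Real.hasDerivAt_rpow_const (x := y) (p := α)
      (Or.inl (by have := hj1.trans_le hy.1; linarith))).continuousAt).continuousWithinAt
  obtain ⟨c, hcmem, hcd⟩ := exists_hasDerivAt_eq_slope (fun x : ℝ => x ^ α)
    (fun y => α * y ^ (α-1)) hlt hc hd
  have hcpos : (0:ℝ) < c := hj1.trans hcmem.1
  have hslope : α * c ^ (α-1) = ((j:ℝ)+2) ^ α - ((j:ℝ)+1) ^ α := by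
    rw [hcd]
    have : (j:ℝ)+2 - ((j:ℝ)+1) = 1 := by ring
    rw [this, div_one]
  -- lower bound on c^(α-1)
  have hc2 : (1/2) * ((j:ℝ)+1) ^ (α-1) ≤ c ^ (α-1) := by
    rcases le_or_gt α 1 with hle | hgt
    · have hcle : c ≤ 2 * ((j:ℝ)+1) := by
        have : ((j:ℝ)+2) ≤ 2 * ((j:ℝ)+1) := by
          have : (0:ℝ) ≤ (j:ℝ) := Nat.cast_nonneg j
          linarith
        linarith [hcmem.2]
      have h1 : (2 * ((j:ℝ)+1)) ^ (α-1) ≤ c ^ (α-1) :=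
        Real.rpow_le_rpow_of_nonpos hcpos hcle (by linarith)
      have h2 : (2 * ((j:ℝ)+1)) ^ (α-1) = 2 ^ (α-1) * ((j:ℝ)+1) ^ (α-1) :=
        Real.mul_rpow (by norm_num) hj1.le
      have h3 : (1/2 : ℝ) ≤ 2 ^ (α-1) := by
        have := Real.rpow_le_rpow_of_exponent_le (by norm_num : (1:ℝ) ≤ 2)
          (by linarith : (-1:ℝ) ≤ α-1)
        rw [Real.rpow_neg_one] at this
        linarith
      have h4 : (0:ℝ) ≤ ((j:ℝ)+1) ^ (α-1) := Real.rpow_nonneg hj1.le _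
      nlinarith
    · have h1 : ((j:ℝ)+1) ^ (α-1) ≤ c ^ (α-1) :=
        Real.rpow_le_rpow hj1.le hcmem.1.le (by linarith)
      have h4 : (0:ℝ) ≤ ((j:ℝ)+1) ^ (α-1) := Real.rpow_nonneg hj1.le _
      linarith
  have hsplit : ((j:ℝ)+1) ^ (α-1) = ((j:ℝ)+1) ^ (α-1+β) * ((j:ℝ)+1) ^ (-β) := by
    rw [← Real.rpow_add hj1]; ring_nf
  have hβ0 : (0:ℝ) ≤ ((j:ℝ)+1) ^ (-β) := Real.rpow_nonneg hj1.le _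
  have hkey : ((j:ℝ)+1) ^ (-β) ≤ α * c ^ (α-1) := by
    have h5 : (2/α) * ((j:ℝ)+1) ^ (-β) ≤ ((j:ℝ)+1) ^ (α-1+β) * ((j:ℝ)+1) ^ (-β) :=
      mul_le_mul_of_nonneg_right hj hβ0
    rw [← hsplit] at h5
    have h6 : α * ((1/2) * ((j:ℝ)+1) ^ (α-1)) ≤ α * c ^ (α-1) :=
      mul_le_mul_of_nonneg_left hc2 hα.le
    have h7 : α * ((1/2) * ((2/α) * ((j:ℝ)+1) ^ (-β))) ≤ α * ((1/2) * ((j:ℝ)+1) ^ (α-1)) := by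
      have := mul_le_mul_of_nonneg_left h5 (by positivity : (0:ℝ) ≤ α * (1/2))
      nlinarith
    have h8 : α * ((1/2) * ((2/α) * ((j:ℝ)+1) ^ (-β))) = ((j:ℝ)+1) ^ (-β) := by
      field_simp
    linarith
  linarith [hslope, hkey]

/-- For `α > 0`, `β > 1` and `Ω(α,β) = ⋃_{j≥1} (j^α, j^α + j^{-β}) ⊆ ℝ`,
one has `|Ω(α,β)| < ∞` and, with `D = (1-(α+β))/α`,
`V_{Ω(α,β)}(t)/t^{1+D} → 1/(β-1)` as `t → +∞`; i.e. `Ω(α,β)` is Minkowski measurable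
at infinity with `dim_B(∞,Ω(α,β)) = D` and `M^D(∞,Ω(α,β)) = 1/(β-1)`. -/
theorem stmt_2 (α β : ℝ) (hα : 0 < α) (hβ : 1 < β)
    (Ω : Set ℝ)
    (hΩ : Ω = ⋃ j : ℕ,
      Set.Ioo (((j : ℝ) + 1) ^ α) (((j : ℝ) + 1) ^ α + ((j : ℝ) + 1) ^ (-β))) :
    volume Ω < ⊤ ∧
    Tendsto (fun t : ℝ =>
        (volume {x ∈ Ω | t < |x|}).toReal / t ^ ((1 : ℝ) + (1 - (α + β)) / α))
      atTop (𝓝 (1 / (β - 1))) := by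
  obtain ⟨J0, hJ0⟩ := eventually_atTop.1 (gap_lemma α β hα hβ)
  have hβ1 : (0:ℝ) < β - 1 := by linarith
  have hsum := summable_ell β hβ
  have hℓnonneg : ∀ j : ℕ, (0:ℝ) ≤ ((j:ℝ)+1) ^ (-β) := fun j =>
    Real.rpow_nonneg (by positivity) _
  set a : ℕ → ℝ := fun j => ((j:ℝ)+1) ^ α with ha_def
  set ℓ : ℕ → ℝ := fun j => ((j:ℝ)+1) ^ (-β) with hℓ_def
  set I : ℕ → Set ℝ := fun j => Set.Ioo (a j) (a j + ℓ j) with hI_def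
  have hΩ' : Ω = ⋃ j : ℕ, I j := hΩ
  have hvolI : ∀ j : ℕ, volume (I j) = ENNReal.ofReal (ℓ j) := by
    intro j; simp [hI_def, Real.volume_Ioo]
  have hfin : volume Ω < ⊤ := by
    calc volume Ω ≤ ∑' j : ℕ, volume (I j) := by rw [hΩ']; exact measure_iUnion_le _
      _ = ∑' j : ℕ, ENNReal.ofReal (ℓ j) := by simp [hvolI]
      _ = ENNReal.ofReal (∑' j : ℕ, ℓ j) :=
          (ENNReal.ofReal_tsum_of_nonneg hℓnonneg hsum).symm
      _ < ⊤ := ENNReal.ofReal_lt_top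
  refine ⟨hfin, ?_⟩
  set q : ℝ := (1 : ℝ) + (1 - (α + β)) / α with hq_def
  set V : ℝ → ℝ := fun t => (volume {x ∈ Ω | t < |x|}).toReal with hV_def
  set A : ℝ → ℝ := fun t => t ^ (α⁻¹ : ℝ) with hA_def
  have hα' : (0:ℝ) < α⁻¹ := by positivity
  have hq : ∀ t : ℝ, 0 < t → t ^ q = (A t) ^ (1-β) := by
    intro t ht
    simp only [hA_def]
    rw [← Real.rpow_mul ht.le, hq_def]
    congr 1
    field_simp
    ring
  have hAtop : Tendsto A atTop atTop := tendsto_rpow_atTop hα'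
  have hmono_a : ∀ j j' : ℕ, j ≤ j' → a j ≤ a j' := by
    intro j j' h
    have : ((j:ℝ)+1) ≤ ((j':ℝ)+1) := by
      have := (Nat.cast_le (α := ℝ)).mpr h; linarith
    exact Real.rpow_le_rpow (by positivity) this hα.le
  set S : ℕ → ℝ := fun n => ∑' k : ℕ, ((n:ℝ)+(k:ℝ)+1) ^ (-β) with hS_def
  have hSnonneg : ∀ n, 0 ≤ S n := fun n =>
    tsum_nonneg (fun k => Real.rpow_nonneg (by positivity) _)
  have hcast : ∀ n k : ℕ, ℓ (n + k) = ((n:ℝ)+(k:ℝ)+1) ^ (-β) := by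
    intro n k; simp only [hℓ_def]; push_cast; ring_nf
  set L : ℝ → ℝ := fun t => ((A t + 1) / A t) ^ (1-β) / (β-1) with hL_def
  set U : ℝ → ℝ := fun t => (((t-1) ^ (α⁻¹ : ℝ) - 1) / A t) ^ (1-β) / (β-1) with hU_def
  have hcont1 : ContinuousAt (fun x : ℝ => x ^ (1-β)) 1 :=
    Real.continuousAt_rpow_const 1 _ (Or.inl one_ne_zero)
  have hcont2 : ContinuousAt (fun x : ℝ => x ^ (α⁻¹ : ℝ)) 1 :=
    Real.continuousAt_rpow_const 1 _ (Or.inl one_ne_zero)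
  have hinnerL : Tendsto (fun t => (A t + 1) / A t) atTop (𝓝 1) := by
    have h1 : Tendsto (fun t => 1 + (A t)⁻¹) atTop (𝓝 (1 + 0)) :=
      tendsto_const_nhds.add (tendsto_inv_atTop_zero.comp hAtop)
    rw [add_zero] at h1
    refine h1.congr' ?_
    filter_upwards [hAtop.eventually_gt_atTop 0] with t hA0
    field_simp
  have hinnerU : Tendsto (fun t => ((t-1) ^ (α⁻¹ : ℝ) - 1) / A t) atTop (𝓝 1) := by
    have hq1 : Tendsto (fun t : ℝ => ((t-1)/t) ^ (α⁻¹ : ℝ)) atTop (𝓝 1) := by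
      have hb : Tendsto (fun t : ℝ => (t-1)/t) atTop (𝓝 1) := by
        have h1 : Tendsto (fun t : ℝ => 1 - t⁻¹) atTop (𝓝 (1 - 0)) :=
          tendsto_const_nhds.sub tendsto_inv_atTop_zero
        rw [sub_zero] at h1
        refine h1.congr' ?_
        filter_upwards [eventually_gt_atTop (0:ℝ)] with t ht
        field_simp
      have := hcont2.tendsto.comp hb
      rwa [Real.one_rpow] at this
    have h2 : Tendsto (fun t : ℝ => ((t-1)/t) ^ (α⁻¹ : ℝ) - (A t)⁻¹) atTop (𝓝 (1 - 0)) :=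
      hq1.sub (tendsto_inv_atTop_zero.comp hAtop)
    rw [sub_zero] at h2
    refine h2.congr' ?_
    filter_upwards [eventually_ge_atTop (1:ℝ), hAtop.eventually_gt_atTop 0] with t ht hA0
    have ht0 : (0:ℝ) < t := by linarith
    have hdiv : ((t-1)/t) ^ (α⁻¹ : ℝ) = (t-1) ^ (α⁻¹ : ℝ) / t ^ (α⁻¹ : ℝ) :=
      Real.div_rpow (by linarith) ht0.le _
    simp only [hA_def] at hA0 ⊢
    rw [hdiv]
    field_simp
  have hLlim : Tendsto L atTop (𝓝 (1 / (β-1))) := by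
    have := (hcont1.tendsto.comp hinnerL).div_const (β-1)
    simpa [hL_def, Real.one_rpow, Function.comp] using this
  have hUlim : Tendsto U atTop (𝓝 (1 / (β-1))) := by
    have := (hcont1.tendsto.comp hinnerU).div_const (β-1)
    simpa [hU_def, Real.one_rpow, Function.comp] using this
  have hA1top : Tendsto (fun t : ℝ => (t-1) ^ (α⁻¹ : ℝ)) atTop atTop :=
    (tendsto_rpow_atTop hα').comp (tendsto_atTop_add_const_right _ (-1) tendsto_id)
  -- upper bound
  have hUbound : ∀ᶠ t : ℝ in atTop, V t / t ^ q ≤ U t := by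
    filter_upwards [eventually_ge_atTop (2:ℝ), hA1top.eventually_ge_atTop 2,
      hAtop.eventually_gt_atTop 0] with t ht2 hAt1 hA0
    have ht0 : (0:ℝ) < t := by linarith
    have ht1 : (0:ℝ) ≤ t - 1 := by linarith
    set k : ℕ := ⌊(t-1) ^ (α⁻¹ : ℝ)⌋₊ with hk_def
    have hk1 : 1 ≤ k :=
      Nat.le_floor (by exact_mod_cast (by linarith : (1:ℝ) ≤ (t-1) ^ (α⁻¹ : ℝ)))
    have hsubset : {x ∈ Ω | t < |x|} ⊆ ⋃ i : ℕ, I (k + i) := by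
      rintro x ⟨hxΩ, hxt⟩
      rw [hΩ'] at hxΩ
      obtain ⟨j, hxj⟩ := Set.mem_iUnion.1 hxΩ
      have hapos : 0 < a j := Real.rpow_pos_of_pos (by positivity) _
      have hxpos : 0 < x := hapos.trans hxj.1
      have habs : |x| = x := abs_of_pos hxpos
      have hlj : ℓ j ≤ 1 :=
        Real.rpow_le_one_of_one_le_of_nonpos
          (by linarith [Nat.cast_nonneg (α := ℝ) j]) (by linarith)
      have haj : t - 1 < a j := by
        have h2 : x < a j + ℓ j := hxj.2
        rw [habs] at hxt
        linarith
      have hj1 : (t-1) ^ (α⁻¹ : ℝ) < (j:ℝ)+1 := by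
        by_contra hcon
        push_neg at hcon
        have h3 := Real.rpow_le_rpow (by positivity) hcon hα.le
        rw [Real.rpow_inv_rpow ht1 hα.ne'] at h3
        simp only [ha_def] at haj
        linarith
      have hkj : k ≤ j := by
        have h1 : (k:ℝ) ≤ (t-1) ^ (α⁻¹ : ℝ) := Nat.floor_le (by positivity)
        have h5 : (k:ℝ) < (j:ℝ)+1 := by linarith
        have h6 : (k:ℕ) < j+1 := by exact_mod_cast h5
        omega
      exact Set.mem_iUnion.2 ⟨j - k, by rw [Nat.add_sub_cancel' hkj]; exact hxj⟩
    have hmeas : volume {x ∈ Ω | t < |x|} ≤ ENNReal.ofReal (S k) := by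
      calc volume {x ∈ Ω | t < |x|} ≤ volume (⋃ i : ℕ, I (k + i)) := measure_mono hsubset
        _ ≤ ∑' i : ℕ, volume (I (k + i)) := measure_iUnion_le _
        _ = ∑' i : ℕ, ENNReal.ofReal (((k:ℝ)+(i:ℝ)+1) ^ (-β)) := by
            simp only [hvolI, hcast]
        _ = ENNReal.ofReal (S k) := by
            rw [hS_def]
            exact (ENNReal.ofReal_tsum_of_nonneg
              (fun i => Real.rpow_nonneg (by positivity) _)
              (summable_ell_shift β hβ k)).symm
    have hVle : V t ≤ S k := ENNReal.toReal_le_of_le_ofReal (hSnonneg k) hmeas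
    have hSk : S k ≤ (k:ℝ) ^ (1-β) / (β-1) := tail_le β hβ k hk1
    have hk2 : (t-1) ^ (α⁻¹ : ℝ) - 1 ≤ (k:ℝ) := (Nat.sub_one_lt_floor _).le
    have hkpos : (0:ℝ) < (t-1) ^ (α⁻¹ : ℝ) - 1 := by linarith
    have hmono : (k:ℝ) ^ (1-β) ≤ ((t-1) ^ (α⁻¹ : ℝ) - 1) ^ (1-β) :=
      Real.rpow_le_rpow_of_nonpos hkpos hk2 (by linarith)
    have hVU : V t ≤ ((t-1) ^ (α⁻¹ : ℝ) - 1) ^ (1-β) / (β-1) :=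
      hVle.trans (hSk.trans (div_le_div_of_nonneg_right hmono hβ1.le))
    have htq : t ^ q = (A t) ^ (1-β) := hq t ht0
    have htqpos : 0 < t ^ q := Real.rpow_pos_of_pos ht0 _
    have hUeq : U t = (((t-1) ^ (α⁻¹ : ℝ) - 1) ^ (1-β) / (β-1)) / t ^ q := by
      simp only [hU_def]
      rw [Real.div_rpow hkpos.le (Real.rpow_nonneg ht0.le _), htq]
      simp only [hA_def]
      rw [div_right_comm]
    rw [hUeq]
    exact div_le_div_of_nonneg_right hVU htqpos.le
  -- lower bound
  have hLbound : ∀ᶠ t : ℝ in atTop, L t ≤ V t / t ^ q := by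
    filter_upwards [eventually_ge_atTop (2:ℝ), hAtop.eventually_ge_atTop ((J0:ℝ)+1),
      hAtop.eventually_gt_atTop 0] with t ht2 hAJ hA0
    have ht0 : (0:ℝ) < t := by linarith
    set n : ℕ := ⌈A t⌉₊ with hn_def
    have hn0 : 0 < n := Nat.ceil_pos.mpr hA0
    set m : ℕ := n - 1 with hm_def
    have hmn : m + 1 = n := Nat.succ_pred_eq_of_pos hn0
    have hmJ0 : J0 ≤ m := by
      have h1 : ((J0:ℝ)+1) ≤ (n:ℝ) := hAJ.trans (Nat.le_ceil _)
      have h2 : J0 + 1 ≤ n := by exact_mod_cast h1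
      omega
    have hta : ∀ j : ℕ, m ≤ j → t ≤ a j := by
      intro j hj
      have h1 : A t ≤ (j:ℝ)+1 := by
        have h3 : (n:ℝ) ≤ (j:ℝ)+1 := by exact_mod_cast (by omega : n ≤ j+1)
        linarith [Nat.le_ceil (A t)]
      simp only [hA_def] at h1
      calc t = (t ^ (α⁻¹ : ℝ)) ^ α := (Real.rpow_inv_rpow ht0.le hα.ne').symm
        _ ≤ ((j:ℝ)+1) ^ α := Real.rpow_le_rpow (by positivity) h1 hα.le
    have hgap : ∀ j j' : ℕ, m ≤ j → j < j' → a j + ℓ j ≤ a j' := by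
      intro j j' h1 h2
      have hg := hJ0 j (hmJ0.trans h1)
      have he : a (j+1) = ((j:ℝ)+2) ^ α := by
        simp only [ha_def]; push_cast; ring_nf
      calc a j + ℓ j ≤ ((j:ℝ)+2) ^ α := hg
        _ = a (j+1) := he.symm
        _ ≤ a j' := hmono_a (j+1) j' h2
    have hdisj : Pairwise (Function.onFun Disjoint (fun i : ℕ => I (m+i))) := by
      have key : ∀ i i' : ℕ, i < i' → Disjoint (I (m+i)) (I (m+i')) := by
        intro i i' hii
        rw [Set.disjoint_left]
        rintro x hx hx'
        have h1 : a (m+i) + ℓ (m+i) ≤ a (m+i') :=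
          hgap (m+i) (m+i') (Nat.le_add_right _ _) (by omega)
        simp only [hI_def, Set.mem_Ioo] at hx hx'
        linarith [hx.2, hx'.1]
      intro i i' hne
      rcases Ne.lt_or_gt hne with h | h
      · exact key _ _ h
      · exact (key _ _ h).symm
    have hsub2 : (⋃ i : ℕ, I (m+i)) ⊆ {x ∈ Ω | t < |x|} := by
      rintro x hx
      obtain ⟨i, hxi⟩ := Set.mem_iUnion.1 hx
      refine ⟨by rw [hΩ']; exact Set.mem_iUnion.2 ⟨m+i, hxi⟩, ?_⟩
      have h1 : t ≤ a (m+i) := hta _ (Nat.le_add_right _ _)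
      have h2 : a (m+i) < x := hxi.1
      calc t < x := by linarith
        _ ≤ |x| := le_abs_self x
    have hmeas2 : ENNReal.ofReal (S m) ≤ volume {x ∈ Ω | t < |x|} := by
      calc ENNReal.ofReal (S m)
          = ∑' i : ℕ, ENNReal.ofReal (((m:ℝ)+(i:ℝ)+1) ^ (-β)) := by
            rw [hS_def]
            exact ENNReal.ofReal_tsum_of_nonneg
              (fun i => Real.rpow_nonneg (by positivity) _)
              (summable_ell_shift β hβ m)
        _ = ∑' i : ℕ, volume (I (m+i)) := by simp only [hvolI, hcast]
        _ = volume (⋃ i : ℕ, I (m+i)) :=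
            (measure_iUnion hdisj fun i => measurableSet_Ioo).symm
        _ ≤ volume {x ∈ Ω | t < |x|} := measure_mono hsub2
    have hfin' : volume {x ∈ Ω | t < |x|} ≠ ⊤ :=
      ((measure_mono (Set.sep_subset _ _)).trans_lt hfin).ne
    have hVge : S m ≤ V t := by
      have h := ENNReal.toReal_mono hfin' hmeas2
      rwa [ENNReal.toReal_ofReal (hSnonneg m)] at h
    have hSm : ((m:ℝ)+1) ^ (1-β) / (β-1) ≤ S m := tail_ge β hβ m
    have hmlt : ((m:ℝ)+1) ≤ A t + 1 := by
      have h1 : (n:ℝ) < A t + 1 := Nat.ceil_lt_add_one hA0.le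
      have h2 : ((m:ℝ)+1) = (n:ℝ) := by exact_mod_cast congrArg (Nat.cast (R := ℝ)) hmn
      linarith
    have hmono2 : (A t + 1) ^ (1-β) ≤ ((m:ℝ)+1) ^ (1-β) :=
      Real.rpow_le_rpow_of_nonpos (by positivity) hmlt (by linarith)
    have hVL : (A t + 1) ^ (1-β) / (β-1) ≤ V t :=
      (div_le_div_of_nonneg_right hmono2 hβ1.le).trans (hSm.trans hVge)
    have htq : t ^ q = (A t) ^ (1-β) := hq t ht0
    have htqpos : 0 < t ^ q := Real.rpow_pos_of_pos ht0 _
    have hLeq : L t = ((A t + 1) ^ (1-β) / (β-1)) / t ^ q := by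
      simp only [hL_def]
      rw [Real.div_rpow (by positivity) (le_of_lt hA0), htq]
      rw [div_right_comm]
    rw [hLeq]
    exact div_le_div_of_nonneg_right hVL htqpos.le
  exact tendsto_of_tendsto_of_tendsto_of_le_of_le' hLlim hUlim hLbound hUbound
end

section
/- Let Ω ⊆ ℝ² be Lebesgue measurable with |Ω| < ∞ and suppose Ω is contained in a horizontal strip {(x,y) : |y| ≤ d} for some d > 0. Then for every real r, limsup_{t→+∞} |{(x,y) ∈ Ω : max(|x|,|y|) > t}|/t^{2+r} = limsup_{t→+∞} |{p ∈ Ω : |p| > t}|/t^{2+r}, and the same equality holds with liminf in place of limsup; i.e., the upper and lower r-dimensional Minkowski contents of Ω at infinity computed with the sup-norm |·|_∞ on ℝ² coincide with those computed with the Euclidean norm. -/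
open MeasureTheory Filter
open scoped Topology ENNReal

private noncomputable def ennMulIso (a : ℝ≥0∞) (h0 : a ≠ 0) (ht : a ≠ ⊤) : ℝ≥0∞ ≃o ℝ≥0∞ :=
  StrictMono.orderIsoOfSurjective (a * ·)
    (fun _ _ h => (ENNReal.mul_lt_mul_iff_right h0 ht).2 h)
    (fun b => ⟨a⁻¹ * b, show a * (a⁻¹ * b) = b by
      rw [← mul_assoc, ENNReal.mul_inv_cancel h0 ht, one_mul]⟩)

private lemma enn_liminf_const_mul {α : Type*} {f : Filter α} (u : α → ℝ≥0∞) {a : ℝ≥0∞}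
    (h0 : a ≠ 0) (ht : a ≠ ⊤) : f.liminf (fun x => a * u x) = a * f.liminf u :=
  (OrderIso.liminf_apply (ennMulIso a h0 ht)).symm

/-- If `Ω ⊆ ℝ²` has finite measure and lies in a horizontal strip
`{(x,y) : |y| ≤ d}`, then for every `r ∈ ℝ` the upper and lower `r`-dimensional Minkowski
contents of `Ω` at infinity computed with the sup-norm `|(x,y)|_∞ = max(|x|,|y|)` coincide
with those computed with the Euclidean norm. -/
theorem stmt_5 (Ω : Set (EuclideanSpace ℝ (Fin 2)))
    (hΩ : MeasurableSet Ω) (hfin : volume Ω < ⊤)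
    (d : ℝ) (hd : 0 < d) (hstrip : ∀ p ∈ Ω, |p 1| ≤ d) (r : ℝ) :
    limsup (fun t : ℝ =>
        volume {p ∈ Ω | t < max |p 0| |p 1|} / ENNReal.ofReal (t ^ ((2 : ℝ) + r))) atTop =
      limsup (fun t : ℝ =>
        volume {p ∈ Ω | t < ‖p‖} / ENNReal.ofReal (t ^ ((2 : ℝ) + r))) atTop ∧
    liminf (fun t : ℝ =>
        volume {p ∈ Ω | t < max |p 0| |p 1|} / ENNReal.ofReal (t ^ ((2 : ℝ) + r))) atTop =
      liminf (fun t : ℝ =>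
        volume {p ∈ Ω | t < ‖p‖} / ENNReal.ofReal (t ^ ((2 : ℝ) + r))) atTop := by
  set f : ℝ → ℝ≥0∞ := fun t =>
    volume {p ∈ Ω | t < max |p 0| |p 1|} / ENNReal.ofReal (t ^ ((2 : ℝ) + r)) with hf
  set g : ℝ → ℝ≥0∞ := fun t =>
    volume {p ∈ Ω | t < ‖p‖} / ENNReal.ofReal (t ^ ((2 : ℝ) + r)) with hg
  have hnorm : ∀ p : EuclideanSpace ℝ (Fin 2), ‖p‖ = Real.sqrt (|p 0| ^ 2 + |p 1| ^ 2) := by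
    intro p
    rw [EuclideanSpace.norm_eq, Fin.sum_univ_two]
    simp [Real.norm_eq_abs]
  have h1 : ∀ p : EuclideanSpace ℝ (Fin 2), max |p 0| |p 1| ≤ ‖p‖ := by
    intro p
    rw [hnorm]
    refine max_le ?_ ?_
    · have h := Real.sqrt_le_sqrt (show |p 0| ^ 2 ≤ |p 0| ^ 2 + |p 1| ^ 2 from le_add_of_nonneg_right (by positivity))
      rwa [Real.sqrt_sq (abs_nonneg _)] at h
    · have h := Real.sqrt_le_sqrt (show |p 1| ^ 2 ≤ |p 0| ^ 2 + |p 1| ^ 2 from le_add_of_nonneg_left (by positivity))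
      rwa [Real.sqrt_sq (abs_nonneg _)] at h
  have h2 : ∀ p : EuclideanSpace ℝ (Fin 2), ‖p‖ ≤ |p 0| + |p 1| := by
    intro p
    rw [hnorm]
    have h := Real.sqrt_le_sqrt (show |p 0| ^ 2 + |p 1| ^ 2 ≤ (|p 0| + |p 1|) ^ 2 by
      nlinarith [abs_nonneg (p 0), abs_nonneg (p 1)])
    rwa [Real.sqrt_sq (by positivity)] at h
  -- easy direction: f ≤ g pointwise
  have hfg : ∀ t, f t ≤ g t := by
    intro t
    refine ENNReal.div_le_div_right (measure_mono ?_) _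
    rintro p ⟨hpΩ, hpt⟩
    exact ⟨hpΩ, lt_of_lt_of_le hpt (h1 p)⟩
  -- key eventual bound for c > 1
  have hev : ∀ c : ℝ, 1 < c → ∀ᶠ t in atTop,
      g t ≤ (ENNReal.ofReal (c ^ ((2 : ℝ) + r)))⁻¹ * f (t * c⁻¹) := by
    intro c hc
    have hc0 : 0 < c := lt_trans one_pos hc
    filter_upwards [eventually_ge_atTop (max 1 (d * c / (c - 1)))] with t ht
    have ht1 : (1 : ℝ) ≤ t := le_trans (le_max_left _ _) ht
    have ht0 : 0 < t := lt_of_lt_of_le one_pos ht1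
    have htd : d * c / (c - 1) ≤ t := le_trans (le_max_right _ _) ht
    have hcd : d * c ≤ t * (c - 1) := by
      rw [div_le_iff₀ (by linarith)] at htd
      linarith
    have hdiv : t * c⁻¹ ≤ t - d := by
      rw [← div_eq_mul_inv, div_le_iff₀ hc0]
      nlinarith
    have hsub : {p ∈ Ω | t < ‖p‖} ⊆ {p ∈ Ω | t * c⁻¹ < max |p 0| |p 1|} := by
      rintro p ⟨hpΩ, hpt⟩
      refine ⟨hpΩ, ?_⟩
      have := h2 p
      have hb := hstrip p hpΩ
      have : t - d < |p 0| := by linarith [le_max_left |p 0| |p 1|]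
      calc t * c⁻¹ ≤ t - d := hdiv
        _ < |p 0| := this
        _ ≤ max |p 0| |p 1| := le_max_left _ _
    have hAB : volume {p ∈ Ω | t < ‖p‖} ≤ volume {p ∈ Ω | t * c⁻¹ < max |p 0| |p 1|} :=
      measure_mono hsub
    have htc0 : 0 < t * c⁻¹ := by positivity
    -- weight identity
    have hw : t ^ ((2 : ℝ) + r) = (t * c⁻¹) ^ ((2 : ℝ) + r) * c ^ ((2 : ℝ) + r) := by
      rw [← Real.mul_rpow (le_of_lt htc0) (le_of_lt hc0), mul_assoc,
        inv_mul_cancel₀ (ne_of_gt hc0), mul_one]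
    set K : ℝ≥0∞ := ENNReal.ofReal (c ^ ((2 : ℝ) + r)) with hK
    have hK0 : K ≠ 0 := by
      simp [hK, ENNReal.ofReal_eq_zero, not_le, Real.rpow_pos_of_pos hc0]
    have hKt : K ≠ ⊤ := ENNReal.ofReal_ne_top
    set W : ℝ≥0∞ := ENNReal.ofReal ((t * c⁻¹) ^ ((2 : ℝ) + r)) with hW
    have hW0 : W ≠ 0 := by
      simp [hW, ENNReal.ofReal_eq_zero, not_le, Real.rpow_pos_of_pos htc0]
    have hWt : W ≠ ⊤ := ENNReal.ofReal_ne_top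
    have hwE : ENNReal.ofReal (t ^ ((2 : ℝ) + r)) = W * K := by
      rw [hw, ENNReal.ofReal_mul (le_of_lt (Real.rpow_pos_of_pos htc0 _))]
    calc g t = volume {p ∈ Ω | t < ‖p‖} / (W * K) := by rw [hg]; simp only; rw [hwE]
      _ ≤ volume {p ∈ Ω | t * c⁻¹ < max |p 0| |p 1|} / (W * K) :=
          ENNReal.div_le_div_right hAB _
      _ = K⁻¹ * f (t * c⁻¹) := by
          rw [hf]
          simp only [div_eq_mul_inv]
          rw [ENNReal.mul_inv (Or.inl hW0) (Or.inl hWt)]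
          ring
  -- map of dilation
  have hmap : ∀ c : ℝ, 1 < c → Filter.map (fun t : ℝ => t * c⁻¹) atTop = atTop := by
    intro c hc
    have hpos : (0 : ℝ) < c⁻¹ := by positivity
    exact OrderIso.map_atTop (OrderIso.mulRight₀ c⁻¹ hpos)
  have hKfacts : ∀ c : ℝ, 1 < c →
      ENNReal.ofReal (c ^ ((2 : ℝ) + r)) ≠ 0 ∧ ENNReal.ofReal (c ^ ((2 : ℝ) + r)) ≠ ⊤ := by
    intro c hc
    have hc0 : 0 < c := lt_trans one_pos hc
    exact ⟨by simp [ENNReal.ofReal_eq_zero, not_le, Real.rpow_pos_of_pos hc0],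
      ENNReal.ofReal_ne_top⟩
  have hls : ∀ c : ℝ, 1 < c → limsup g atTop ≤
      (ENNReal.ofReal (c ^ ((2 : ℝ) + r)))⁻¹ * limsup f atTop := by
    intro c hc
    obtain ⟨hK0, hKt⟩ := hKfacts c hc
    calc limsup g atTop
        ≤ limsup (fun t => (ENNReal.ofReal (c ^ ((2 : ℝ) + r)))⁻¹ * f (t * c⁻¹)) atTop :=
          limsup_le_limsup (hev c hc)
      _ = (ENNReal.ofReal (c ^ ((2 : ℝ) + r)))⁻¹ * limsup (fun t => f (t * c⁻¹)) atTop :=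
          ENNReal.limsup_const_mul_of_ne_top (ENNReal.inv_ne_top.2 hK0)
      _ = (ENNReal.ofReal (c ^ ((2 : ℝ) + r)))⁻¹ * limsup f atTop := by
          rw [show (fun t : ℝ => f (t * c⁻¹)) = f ∘ (fun t : ℝ => t * c⁻¹) from rfl,
            limsup_comp, hmap c hc]
  have hli : ∀ c : ℝ, 1 < c → liminf g atTop ≤
      (ENNReal.ofReal (c ^ ((2 : ℝ) + r)))⁻¹ * liminf f atTop := by
    intro c hc
    obtain ⟨hK0, hKt⟩ := hKfacts c hc
    calc liminf g atTop
        ≤ liminf (fun t => (ENNReal.ofReal (c ^ ((2 : ℝ) + r)))⁻¹ * f (t * c⁻¹)) atTop :=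
          liminf_le_liminf (hev c hc)
      _ = (ENNReal.ofReal (c ^ ((2 : ℝ) + r)))⁻¹ * liminf (fun t => f (t * c⁻¹)) atTop :=
          enn_liminf_const_mul _ (ENNReal.inv_ne_zero.2 hKt) (ENNReal.inv_ne_top.2 hK0)
      _ = (ENNReal.ofReal (c ^ ((2 : ℝ) + r)))⁻¹ * liminf f atTop := by
          rw [show (fun t : ℝ => f (t * c⁻¹)) = f ∘ (fun t : ℝ => t * c⁻¹) from rfl,
            liminf_comp, hmap c hc]
  -- limit of the constant as c → 1⁺
  have hIinv : Tendsto (fun c : ℝ => (ENNReal.ofReal (c ^ ((2 : ℝ) + r)))⁻¹)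
      (𝓝[>] (1 : ℝ)) (𝓝 1) := by
    have hcont : ContinuousAt (fun c : ℝ => c ^ ((2 : ℝ) + r)) 1 :=
      Real.continuousAt_rpow_const 1 _ (Or.inl one_ne_zero)
    have h1 : Tendsto (fun c : ℝ => ENNReal.ofReal (c ^ ((2 : ℝ) + r))) (𝓝[>] (1 : ℝ)) (𝓝 1) := by
      have := (ENNReal.continuous_ofReal.continuousAt.comp hcont).tendsto
      simp only [Function.comp, Real.one_rpow, ENNReal.ofReal_one] at this
      exact this.mono_left nhdsWithin_le_nhds
    simpa using ENNReal.tendsto_inv_iff.2 h1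
  have hbound : ∀ L : ℝ≥0∞, ∀ M : ℝ≥0∞,
      (∀ c : ℝ, 1 < c → M ≤ (ENNReal.ofReal (c ^ ((2 : ℝ) + r)))⁻¹ * L) → M ≤ L := by
    intro L M hM
    have htend : Tendsto (fun c : ℝ => (ENNReal.ofReal (c ^ ((2 : ℝ) + r)))⁻¹ * L)
        (𝓝[>] (1 : ℝ)) (𝓝 L) := by
      simpa using ENNReal.Tendsto.mul_const hIinv (Or.inl one_ne_zero)
    exact ge_of_tendsto htend (eventually_mem_nhdsWithin.mono fun c hc => hM c hc)
  constructor
  · exact le_antisymm (limsup_le_limsup (Eventually.of_forall hfg))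
      (hbound _ _ hls)
  · exact le_antisymm (liminf_le_liminf (Eventually.of_forall hfg))
      (hbound _ _ hli)
end

section
/- There exists a Lebesgue measurable set Ω ⊆ ℝ² with 0 < |Ω| < ∞ such that: (i) for every real r < -2, liminf_{t→+∞} V_Ω(t)/t^{2+r} = +∞ (so both the upper and lower r-dimensional Minkowski contents of Ω at infinity are +∞ for all r < -2), and (ii) V_Ω(t)/t^{0} → 0 as t → +∞, i.e., M^{-2}(∞,Ω) = 0. In particular dim_B(∞,Ω) = -2 and Ω is Minkowski degenerate at infinity. -/
open MeasureTheory Filter Set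
open scoped Topology ENNReal

noncomputable def gg : ℝ → ℝ := fun x => (x * Real.log x ^ 2)⁻¹
noncomputable def GG : ℝ → ℝ := fun x => -(Real.log x)⁻¹

lemma GG_deriv {x : ℝ} (hx : x ∈ Set.Ici (3:ℝ)) : HasDerivAt GG (gg x) x := by
  have hx3 : (3:ℝ) ≤ x := hx
  have hx0 : x ≠ 0 := by positivity
  have hlog : (1:ℝ) ≤ Real.log x := by
    calc (1:ℝ) ≤ Real.log 3 := by
          rw [Real.le_log_iff_exp_le (by norm_num)]
          have := Real.exp_one_lt_d9; linarith
      _ ≤ Real.log x := Real.log_le_log (by norm_num) hx3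
  have hlogne : Real.log x ≠ 0 := by linarith
  have h1 : HasDerivAt Real.log x⁻¹ x := Real.hasDerivAt_log hx0
  have h2 := h1.inv hlogne
  have h3 := h2.neg
  rw [show gg x = -(-x⁻¹ / Real.log x ^ 2) by
    unfold gg; rw [neg_div, neg_neg, div_eq_mul_inv, mul_inv]]
  exact h3

lemma GG_tendsto : Tendsto GG atTop (𝓝 0) := by
  have := (Real.tendsto_log_atTop.inv_tendsto_atTop).neg
  unfold GG
  simpa using this

lemma gg_nonneg {x : ℝ} (hx : x ∈ Set.Ioi (3:ℝ)) : 0 ≤ gg x := by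
  have h : (0:ℝ) < x := by simp at hx; linarith
  unfold gg; positivity

lemma gg_intOn {t : ℝ} (ht : 3 ≤ t) : IntegrableOn gg (Set.Ioi t) := by
  apply integrableOn_Ioi_deriv_of_nonneg' (l := 0)
    (fun x hx => GG_deriv (le_trans ht hx))
    (fun x hx => gg_nonneg (by simp at hx ⊢; linarith)) GG_tendsto

lemma gg_int {t : ℝ} (ht : 3 ≤ t) : ∫ x in Set.Ioi t, gg x = (Real.log t)⁻¹ := by
  rw [integral_Ioi_of_hasDerivAt_of_nonneg' (l := 0)
    (fun x hx => GG_deriv (le_trans ht hx))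
    (fun x hx => gg_nonneg (by simp at hx ⊢; linarith)) GG_tendsto]
  simp [GG]

lemma gg_meas : Measurable gg := (measurable_id.mul (Real.measurable_log.pow_const 2)).inv

noncomputable def SS (t : ℝ) : Set (ℝ × ℝ) := regionBetween (fun _ => 0) gg (Set.Ioi t)

lemma SS_meas (t : ℝ) : MeasurableSet (SS t) :=
  measurableSet_regionBetween measurable_const gg_meas measurableSet_Ioi

lemma vol_SS {t : ℝ} (ht : 3 ≤ t) : volume (SS t) = ENNReal.ofReal (Real.log t)⁻¹ := by
  rw [SS, Measure.volume_eq_prod ℝ ℝ, volume_regionBetween_eq_integral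
    (integrableOn_zero) (gg_intOn ht) measurableSet_Ioi
    (fun x hx => gg_nonneg (by simp at hx ⊢; linarith))]
  simp [gg_int ht]

noncomputable def FF : EuclideanSpace ℝ (Fin 2) → ℝ × ℝ := fun p => (p 0, p 1)

lemma FF_mp : MeasurePreserving FF volume volume := by
  exact (volume_preserving_piFinTwo fun _ => ℝ).comp
    (EuclideanSpace.volume_preserving_symm_measurableEquiv_toLp (Fin 2))

lemma coord_le (p : EuclideanSpace ℝ (Fin 2)) : p 0 ≤ ‖p‖ := by
  calc p 0 ≤ |p 0| := le_abs_self _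
    _ = Real.sqrt ((p 0)^2) := (Real.sqrt_sq_eq_abs _).symm
    _ ≤ ‖p‖ := by
        rw [EuclideanSpace.norm_eq]
        apply Real.sqrt_le_sqrt
        have := Finset.single_le_sum (f := fun i => ‖p i‖^2)
          (fun i _ => by positivity) (Finset.mem_univ 0)
        simpa [Real.norm_eq_abs, sq_abs] using this

/-- There exists a Lebesgue measurable `Ω ⊆ ℝ²` with `0 < |Ω| < ∞` such that
(i) for every `r < -2` the lower (hence also the upper) `r`-dimensional Minkowski content
of `Ω` at infinity is `+∞`, and (ii) `V_Ω(t)/t^0 → 0` as `t → +∞`, i.e. `M^{-2}(∞,Ω) = 0`.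
In particular `dim_B(∞,Ω) = -2` and `Ω` is Minkowski degenerate at infinity. -/
theorem stmt_6 :
    ∃ Ω : Set (EuclideanSpace ℝ (Fin 2)),
      MeasurableSet Ω ∧ 0 < volume Ω ∧ volume Ω < ⊤ ∧
      (∀ r : ℝ, r < -2 →
        liminf (fun t : ℝ =>
            volume {p ∈ Ω | t < ‖p‖} / ENNReal.ofReal (t ^ ((2 : ℝ) + r))) atTop = ⊤ ∧
        limsup (fun t : ℝ =>
            volume {p ∈ Ω | t < ‖p‖} / ENNReal.ofReal (t ^ ((2 : ℝ) + r))) atTop = ⊤) ∧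
      Tendsto (fun t : ℝ =>
          (volume {p ∈ Ω | t < ‖p‖}).toReal / t ^ (0 : ℝ)) atTop (𝓝 0) := by
  refine ⟨FF ⁻¹' (SS 3), FF_mp.measurable (SS_meas 3), ?_, ?_, ?_, ?_⟩
  case _ =>
    rw [FF_mp.measure_preimage (SS_meas 3).nullMeasurableSet, vol_SS le_rfl]
    simp only [ENNReal.ofReal_pos]
    rw [inv_pos]
    exact Real.log_pos (by norm_num)
  case _ =>
    rw [FF_mp.measure_preimage (SS_meas 3).nullMeasurableSet, vol_SS le_rfl]
    exact ENNReal.ofReal_lt_top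
  all_goals
    set Ω : Set (EuclideanSpace ℝ (Fin 2)) := FF ⁻¹' (SS 3) with hΩ
    have hΩmeas : MeasurableSet Ω := FF_mp.measurable (SS_meas 3)
    have hΩfin : volume Ω < ⊤ := by
      rw [hΩ, FF_mp.measure_preimage (SS_meas 3).nullMeasurableSet, vol_SS le_rfl]
      exact ENNReal.ofReal_lt_top
    have hlow : ∀ t : ℝ, 3 ≤ t →
        ENNReal.ofReal (Real.log t)⁻¹ ≤ volume {p ∈ Ω | t < ‖p‖} := by
      intro t ht
      rw [← vol_SS ht, ← FF_mp.measure_preimage (SS_meas t).nullMeasurableSet]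
      apply measure_mono
      intro p hp
      obtain ⟨hp1, hp2⟩ := hp
      have hp1' : t < p 0 := hp1
      refine ⟨⟨?_, hp2⟩, lt_of_lt_of_le hp1' (coord_le p)⟩
      show (3:ℝ) < p 0
      linarith
  -- part (i)
  case _ =>
      intro r hr
      set s : ℝ := -((2:ℝ) + r) with hs
      have hspos : 0 < s := by rw [hs]; linarith
      have htop : Tendsto (fun t : ℝ =>
          volume {p ∈ Ω | t < ‖p‖} / ENNReal.ofReal (t ^ ((2 : ℝ) + r))) atTop (𝓝 ⊤) := by
        apply tendsto_nhds_top_mono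
          (f := fun t : ℝ => ENNReal.ofReal ((Real.log t)⁻¹ / t ^ ((2:ℝ) + r)))
        · apply ENNReal.tendsto_ofReal_atTop.comp
          have hdiv : Tendsto (fun t : ℝ => Real.log t / t ^ s) atTop (𝓝 0) :=
            (isLittleO_log_rpow_atTop hspos).tendsto_div_nhds_zero
          have hmem : ∀ᶠ t : ℝ in atTop, Real.log t / t ^ s ∈ Set.Ioi (0:ℝ) := by
            filter_upwards [eventually_ge_atTop (3:ℝ)] with t ht
            have h1 : 0 < Real.log t := Real.log_pos (by linarith)
            have h2 : 0 < t ^ s := Real.rpow_pos_of_pos (by linarith) _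
            exact div_pos h1 h2
          have h2 : Tendsto (fun t : ℝ => Real.log t / t ^ s) atTop (𝓝[>] 0) :=
            tendsto_nhdsWithin_iff.mpr ⟨hdiv, hmem⟩
          have h3 := h2.inv_tendsto_nhdsGT_zero
          apply h3.congr'
          filter_upwards [eventually_ge_atTop (3:ℝ)] with t ht
          have htpos : (0:ℝ) < t := by linarith
          have h4 : t ^ ((2:ℝ) + r) = (t ^ s)⁻¹ := by
            rw [hs, Real.rpow_neg htpos.le, inv_inv]
          simp only [Pi.inv_apply]
          rw [h4]
          simp [division_def, mul_inv, inv_inv, mul_comm]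
        · filter_upwards [eventually_ge_atTop (3:ℝ)] with t ht
          have hpow : 0 < t ^ ((2:ℝ) + r) := Real.rpow_pos_of_pos (by linarith) _
          rw [ENNReal.ofReal_div_of_pos hpow]
          exact ENNReal.div_le_div_right (hlow t ht) _
      exact ⟨htop.liminf_eq, htop.limsup_eq⟩
  -- part (ii)
  case _ =>
      have hmeas_t : ∀ t : ℝ, NullMeasurableSet {p ∈ Ω | t < ‖p‖} volume := by
        intro t
        have : {p ∈ Ω | t < ‖p‖} = Ω ∩ (fun p : EuclideanSpace ℝ (Fin 2) => ‖p‖) ⁻¹' Ioi t := rfl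
        rw [this]
        exact (hΩmeas.inter (measurable_norm measurableSet_Ioi)).nullMeasurableSet
      have hanti : Antitone (fun t : ℝ => {p ∈ Ω | t < ‖p‖}) := by
        intro a b hab p hp
        exact ⟨hp.1, lt_of_le_of_lt hab hp.2⟩
      have hiInter : ⋂ t : ℝ, {p ∈ Ω | t < ‖p‖} = ∅ := by
        ext p
        simp only [Set.mem_iInter, Set.mem_empty_iff_false, iff_false, not_forall]
        exact ⟨‖p‖, fun h => lt_irrefl _ h.2⟩
      have hfin : ∃ t : ℝ, volume {p ∈ Ω | t < ‖p‖} ≠ ⊤ :=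
        ⟨0, ne_of_lt (lt_of_le_of_lt (measure_mono (Set.sep_subset _ _)) hΩfin)⟩
      have htend := tendsto_measure_iInter_atTop (μ := volume) hmeas_t hanti hfin
      rw [hiInter, measure_empty] at htend
      have htoReal : Tendsto (fun t : ℝ => (volume {p ∈ Ω | t < ‖p‖}).toReal) atTop (𝓝 0) := by
        have := (ENNReal.tendsto_toReal (a := 0) (by simp)).comp htend
        simpa [Function.comp_def] using this
      apply htoReal.congr
      intro t
      rw [Real.rpow_zero, div_one]
end

section
/- Let N ≥ 1, let Ω ⊆ ℝ^N be Lebesgue measurable with |Ω| < ∞, let T > 0, and let Φ(x) := x/|x|² be the geometric inversion. Let s ∈ ℂ and assume that x ↦ |x|^{-Re(s)-N} is Lebesgue integrable on {x ∈ Ω : |x| > T}. Then ∫_{{x ∈ Ω : |x| > T}} |x|^{-s-N} dx = ∫_{Φ({x ∈ Ω : |x| > T})} |y|^{s-N} dy, where for a positive real c and w ∈ ℂ, c^w denotes the complex power. In other words, ζ_{∞,Ω}(s;T) = ζ_{0,Φ(Ω)}(s;1/T): the Lapidus zeta function of Ω at infinity equals the relative distance zeta function of the inverted drum (0, Φ(Ω)).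 -/
open MeasureTheory Filter
open scoped Topology ENNReal

/-- For measurable `Ω ⊆ ℝ^N` with `|Ω| < ∞`, `T > 0`, and `s ∈ ℂ` such that
`x ↦ |x|^{-Re s - N}` is integrable on `{x ∈ Ω : |x| > T}`, the Lapidus zeta function of
`Ω` at infinity equals the distance zeta function of the drum obtained by the geometric
inversion `Φ(x) = x/|x|²`:
`∫_{{x∈Ω : |x|>T}} |x|^{-s-N} dx = ∫_{Φ({x∈Ω : |x|>T})} |y|^{s-N} dy`. -/
theorem stmt_8 (N : ℕ) (hN : 1 ≤ N)
    (Ω : Set (EuclideanSpace ℝ (Fin N)))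
    (hΩ : MeasurableSet Ω) (hfin : volume Ω < ⊤)
    (T : ℝ) (hT : 0 < T) (s : ℂ)
    (hint : IntegrableOn (fun x : EuclideanSpace ℝ (Fin N) => ‖x‖ ^ (-s.re - (N : ℝ)))
      {x ∈ Ω | T < ‖x‖} volume) :
    ∫ x in {x ∈ Ω | T < ‖x‖}, (‖x‖ : ℂ) ^ (-s - (N : ℂ)) =
      ∫ y in (fun x : EuclideanSpace ℝ (Fin N) => (‖x‖ ^ 2)⁻¹ • x) '' {x ∈ Ω | T < ‖x‖},
        (‖y‖ : ℂ) ^ (s - (N : ℂ)) := by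
  classical
  set A : Set (EuclideanSpace ℝ (Fin N)) := {x ∈ Ω | T < ‖x‖} with hA
  have hAint : A = Ω ∩ {x | T < ‖x‖} := rfl
  have hAmeas : MeasurableSet A := by
    rw [hAint]
    exact hΩ.inter (measurableSet_lt measurable_const measurable_norm)
  have hx0 : ∀ x ∈ A, x ≠ 0 := by
    intro x hx h0
    have := hx.2
    rw [h0, norm_zero] at this
    exact absurd this (not_lt.2 hT.le)
  have hΦeq : ∀ x : EuclideanSpace ℝ (Fin N), x ≠ 0 →
      (‖x‖ ^ 2)⁻¹ • x = EuclideanGeometry.inversion (0 : EuclideanSpace ℝ (Fin N)) 1 x := by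
    intro x hx
    simp [EuclideanGeometry.inversion_def, dist_eq_norm, div_pow, one_div, inv_pow]
  set f' : EuclideanSpace ℝ (Fin N) →
      (EuclideanSpace ℝ (Fin N) →L[ℝ] EuclideanSpace ℝ (Fin N)) := fun x =>
    ((1 / dist x 0) ^ 2 : ℝ) •
      ((Submodule.span ℝ {x - 0})ᗮ.reflection :
        EuclideanSpace ℝ (Fin N) →L[ℝ] EuclideanSpace ℝ (Fin N)) with hf'
  have hderiv : ∀ x ∈ A,
      HasFDerivWithinAt (fun x : EuclideanSpace ℝ (Fin N) => (‖x‖ ^ 2)⁻¹ • x) (f' x) A x := by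
    intro x hx
    have h1 := EuclideanGeometry.hasFDerivAt_inversion
      (c := (0 : EuclideanSpace ℝ (Fin N))) (R := 1) (hx0 x hx)
    refine (h1.congr_of_eventuallyEq ?_).hasFDerivWithinAt
    filter_upwards [eventually_ne_nhds (hx0 x hx)] with y hy
    exact hΦeq y hy
  have hinj : Set.InjOn (fun x : EuclideanSpace ℝ (Fin N) => (‖x‖ ^ 2)⁻¹ • x) A := by
    intro x hx y hy hxy
    apply EuclideanGeometry.inversion_injective (0 : EuclideanSpace ℝ (Fin N))
      (R := 1) one_ne_zero
    rw [← hΦeq x (hx0 x hx), ← hΦeq y (hx0 y hy)]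
    exact hxy
  rw [integral_image_eq_integral_abs_det_fderiv_smul volume hAmeas hderiv hinj]
  apply setIntegral_congr_fun hAmeas
  intro x hx
  have hxne : x ≠ 0 := hx0 x hx
  have hr : (0 : ℝ) < ‖x‖ := norm_pos_iff.2 hxne
  -- determinant computation
  have hfin2 : Module.Finite ℝ (EuclideanSpace ℝ (Fin N)) := by infer_instance
  have hdet : (f' x).det = (((‖x‖ : ℝ) ^ 2)⁻¹) ^ N * (-1) := by
    have hcoe : ((f' x : EuclideanSpace ℝ (Fin N) →L[ℝ] EuclideanSpace ℝ (Fin N)) :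
        EuclideanSpace ℝ (Fin N) →ₗ[ℝ] EuclideanSpace ℝ (Fin N)) =
        ((1 / dist x 0) ^ 2 : ℝ) •
          (((Submodule.span ℝ {x - 0})ᗮ.reflection).toLinearEquiv :
            EuclideanSpace ℝ (Fin N) →ₗ[ℝ] EuclideanSpace ℝ (Fin N)) := rfl
    have : (f' x).det = LinearMap.det (((1 / dist x 0) ^ 2 : ℝ) •
        (((Submodule.span ℝ {x - 0})ᗮ.reflection).toLinearEquiv :
          EuclideanSpace ℝ (Fin N) →ₗ[ℝ] EuclideanSpace ℝ (Fin N))) := by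
      rw [ContinuousLinearMap.det, hcoe]
    rw [this, LinearMap.det_smul]
    have horth : ((Submodule.span ℝ {x - 0})ᗮ)ᗮ = Submodule.span ℝ {x - 0} :=
      Submodule.orthogonal_orthogonal _
    have hrank : Module.finrank ℝ ((Submodule.span ℝ {x - 0})ᗮ)ᗮ = 1 := by
      rw [horth]
      exact finrank_span_singleton (by simpa using hxne)
    have hdref : LinearMap.det
        ((((Submodule.span ℝ {x - 0})ᗮ.reflection).toLinearEquiv :
          EuclideanSpace ℝ (Fin N) →ₗ[ℝ] EuclideanSpace ℝ (Fin N))) = -1 := by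
      have h := Submodule.det_reflection (𝕜 := ℝ) (K := (Submodule.span ℝ {x - 0})ᗮ)
      rw [hrank, pow_one] at h
      exact h
    rw [hdref, finrank_euclideanSpace, Fintype.card_fin]
    congr 2
    rw [dist_zero_right, one_div, inv_pow]
  have habs : |(f' x).det| = ((‖x‖ : ℝ) ^ 2)⁻¹ ^ N := by
    rw [hdet, abs_mul, abs_neg, abs_one, mul_one, abs_pow, abs_inv, abs_pow, abs_norm]
  have hΦnorm : ‖(‖x‖ ^ 2)⁻¹ • x‖ = ‖x‖⁻¹ := by
    rw [norm_smul, Real.norm_eq_abs, abs_inv, abs_pow, abs_norm, pow_two,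
      mul_inv, mul_assoc, inv_mul_cancel₀ hr.ne', mul_one]
  have hc : ((‖x‖ : ℂ)) ≠ 0 := by exact_mod_cast hr.ne'
  have harg : Complex.arg (‖x‖ : ℂ) ≠ Real.pi := by
    rw [Complex.arg_ofReal_of_nonneg hr.le]
    exact Real.pi_ne_zero.symm
  have h1 : ((‖x‖⁻¹ : ℝ) : ℂ) ^ (s - (N : ℂ)) = (‖x‖ : ℂ) ^ (-(s - (N : ℂ))) := by
    push_cast
    rw [Complex.inv_cpow _ _ harg, Complex.cpow_neg]
  have h2 : ((((‖x‖ : ℝ) ^ 2)⁻¹ ^ N : ℝ) : ℂ) = (‖x‖ : ℂ) ^ ((-(2 * N) : ℤ) : ℂ) := by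
    rw [Complex.cpow_intCast, zpow_neg]
    push_cast
    rw [inv_pow, ← pow_mul]
    norm_cast
  show (‖x‖ : ℂ) ^ (-s - (N:ℂ)) = |(f' x).det| • (‖(‖x‖ ^ 2)⁻¹ • x‖ : ℂ) ^ (s - (N:ℂ))
  rw [habs, hΦnorm, h1, Complex.real_smul, h2, ← Complex.cpow_add _ _ hc]
  congr 1
  push_cast
  ring
end

section
/- Let N ≥ 1, let Ω ⊆ ℝ^N be Lebesgue measurable with |Ω| < ∞, let T > 0, and let D ∈ ℝ be such that for every r > D, limsup_{t→+∞} V_Ω(t)/t^{N+r} = 0 (i.e., D is at least the upper box dimension of Ω at infinity). Then for every s ∈ ℂ with Re s > D, the function x ↦ |x|^{-s-N} is Lebesgue integrable on {x ∈ Ω : |x| > T}; the Lapidus zeta function at infinity ζ_{∞,Ω}(s) := ∫_{{x ∈ Ω : |x| > T}} |x|^{-s-N} dx is holomorphic on the half-plane {s ∈ ℂ : Re s > D}; and on this half-plane its complex derivative is ζ'_{∞,Ω}(s) = -∫_{{x ∈ Ω : |x| > T}} |x|^{-s-N}·log|x| dx. -/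
open MeasureTheory Filter
open scoped Topology ENNReal
open Set Metric


lemma key_int (N : ℕ)
    (Ω : Set (EuclideanSpace ℝ (Fin N)))
    (hΩ : MeasurableSet Ω) (hfin : volume Ω < ⊤)
    (T : ℝ) (hT : 0 < T) (D : ℝ)
    (hD : ∀ r : ℝ, D < r →
      limsup (fun t : ℝ =>
        volume {x ∈ Ω | t < ‖x‖} / ENNReal.ofReal (t ^ ((N : ℝ) + r))) atTop = 0)
    (σ : ℝ) (hσ : D < σ) :
    IntegrableOn (fun x : EuclideanSpace ℝ (Fin N) => ‖x‖ ^ (-σ - (N : ℝ)))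
      {x ∈ Ω | T < ‖x‖} volume := by
  set p : ℝ := -σ - (N : ℝ) with hp
  set A : Set (EuclideanSpace ℝ (Fin N)) := {x ∈ Ω | T < ‖x‖} with hAdef
  have hA : MeasurableSet A :=
    hΩ.inter (measurableSet_lt measurable_const measurable_norm)
  have hAΩ : volume A ≤ volume Ω := measure_mono (fun x hx => hx.1)
  have hmble : Measurable fun x : EuclideanSpace ℝ (Fin N) => ‖x‖ ^ p :=
    measurable_norm.pow measurable_const
  have hnn : ∀ x : EuclideanSpace ℝ (Fin N), 0 ≤ ‖x‖ ^ p :=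
    fun x => Real.rpow_nonneg (norm_nonneg x) p
  refine ⟨hmble.aestronglyMeasurable, ?_⟩
  rw [HasFiniteIntegral]
  have hrw : ∀ x : EuclideanSpace ℝ (Fin N),
      ‖(‖x‖ ^ p : ℝ)‖ₑ = ENNReal.ofReal (‖x‖ ^ p) := fun x =>
    Real.enorm_eq_ofReal (hnn x)
  simp_rw [hrw]
  rcases le_or_gt p 0 with hple | hppos
  · -- bounded case
    calc ∫⁻ x, ENNReal.ofReal (‖x‖ ^ p) ∂(volume.restrict A)
        ≤ ∫⁻ _, ENNReal.ofReal (T ^ p) ∂(volume.restrict A) := by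
          apply lintegral_mono_ae
          filter_upwards [ae_restrict_mem hA] with x hx
          exact ENNReal.ofReal_le_ofReal
            (Real.rpow_le_rpow_of_nonpos hT hx.2.le hple)
      _ = ENNReal.ofReal (T ^ p) * volume A := by
          rw [lintegral_const, Measure.restrict_apply_univ]
      _ < ⊤ := ENNReal.mul_lt_top ENNReal.ofReal_lt_top (lt_of_le_of_lt hAΩ hfin)
  · -- layer cake case
    set r : ℝ := (D + σ) / 2 with hr
    have hDr : D < r := by rw [hr]; linarith
    have hrσ : r < σ := by rw [hr]; linarith
    have hlim := hD r hDr
    have hev : ∀ᶠ t : ℝ in atTop,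
        volume {x ∈ Ω | t < ‖x‖} / ENNReal.ofReal (t ^ ((N : ℝ) + r)) < 1 := by
      apply eventually_lt_of_limsup_lt
      · rw [hlim]; exact zero_lt_one
      · isBoundedDefault
    obtain ⟨t₀, ht₀⟩ := hev.exists_forall_of_atTop
    set t₁ : ℝ := max t₀ 1 with ht₁def
    have ht₁pos : (0:ℝ) < t₁ := lt_of_lt_of_le zero_lt_one (le_max_right _ _)
    have hVle : ∀ u : ℝ, t₁ ≤ u →
        volume {x ∈ Ω | u < ‖x‖} ≤ ENNReal.ofReal (u ^ ((N : ℝ) + r)) := by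
      intro u hu
      have hu0 : 0 < u := lt_of_lt_of_le ht₁pos hu
      have h1 := ht₀ u (le_trans (le_max_left _ _) hu)
      have hb0 : ENNReal.ofReal (u ^ ((N : ℝ) + r)) ≠ 0 := by
        exact (ENNReal.ofReal_pos.mpr (Real.rpow_pos_of_pos hu0 _)).ne'
      rw [ENNReal.div_lt_iff (Or.inl hb0) (Or.inl ENNReal.ofReal_ne_top), one_mul] at h1
      exact h1.le
    set c : ℝ := t₁ ^ p with hcdef
    have hc0 : (0:ℝ) < c := Real.rpow_pos_of_pos ht₁pos p
    set q : ℝ := ((N : ℝ) + r) / p with hq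
    have hqlt : q < -1 := by
      rw [hq, div_lt_iff₀ hppos]
      rw [hp]; ring_nf; linarith
    -- layer cake
    have lc := lintegral_eq_lintegral_meas_lt (volume.restrict A)
      (Eventually.of_forall hnn) hmble.aemeasurable
    rw [lc]
    have hmeas_le : ∀ t : ℝ, (volume.restrict A) {x | t < ‖x‖ ^ p} ≤ volume Ω := by
      intro t
      calc (volume.restrict A) {x | t < ‖x‖ ^ p} ≤ (volume.restrict A) univ :=
            measure_mono (subset_univ _)
        _ = volume A := Measure.restrict_apply_univ _
        _ ≤ volume Ω := hAΩ
    have hsplit : Ioi (0:ℝ) = Ioc 0 c ∪ Ioi c := (Ioc_union_Ioi_eq_Ioi hc0.le).symm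
    rw [hsplit]
    refine lt_of_le_of_lt (lintegral_union_le _ _ _) ?_
    have part1 : ∫⁻ t in Ioc (0:ℝ) c, (volume.restrict A) {x | t < ‖x‖ ^ p} < ⊤ := by
      calc ∫⁻ t in Ioc (0:ℝ) c, (volume.restrict A) {x | t < ‖x‖ ^ p}
          ≤ ∫⁻ _ in Ioc (0:ℝ) c, volume Ω := lintegral_mono (fun t => hmeas_le t)
        _ = volume Ω * volume (Ioc (0:ℝ) c) := by
            rw [lintegral_const, Measure.restrict_apply_univ]
        _ < ⊤ := ENNReal.mul_lt_top hfin measure_Ioc_lt_top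
    have part2 : ∫⁻ t in Ioi c, (volume.restrict A) {x | t < ‖x‖ ^ p} < ⊤ := by
      have hbdd : ∀ t ∈ Ioi c, (volume.restrict A) {x | t < ‖x‖ ^ p}
          ≤ ENNReal.ofReal (t ^ q) := by
        intro t ht
        have htc : c < t := ht
        have ht0 : 0 < t := lt_trans hc0 htc
        set u : ℝ := t ^ p⁻¹ with hu
        have hu0 : 0 < u := Real.rpow_pos_of_pos ht0 _
        have hut₁ : t₁ ≤ u := by
          have : t₁ = c ^ p⁻¹ := by
            rw [hcdef, ← Real.rpow_mul ht₁pos.le,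
              mul_inv_cancel₀ hppos.ne', Real.rpow_one]
          rw [this, hu]
          exact (Real.rpow_le_rpow hc0.le htc.le (inv_nonneg.mpr hppos.le))
        have hsub : {x | t < ‖x‖ ^ p} ∩ A ⊆ {x ∈ Ω | u < ‖x‖} := by
          rintro x ⟨hx1, hx2, _⟩
          refine ⟨hx2, ?_⟩
          have : u < (‖x‖ ^ p) ^ p⁻¹ :=
            Real.rpow_lt_rpow ht0.le hx1 (inv_pos.mpr hppos)
          rwa [← Real.rpow_mul (norm_nonneg x), mul_inv_cancel₀ hppos.ne',
            Real.rpow_one] at this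
        calc (volume.restrict A) {x | t < ‖x‖ ^ p}
            = volume ({x | t < ‖x‖ ^ p} ∩ A) := Measure.restrict_apply' hA
          _ ≤ volume {x ∈ Ω | u < ‖x‖} := measure_mono hsub
          _ ≤ ENNReal.ofReal (u ^ ((N : ℝ) + r)) := hVle u hut₁
          _ = ENNReal.ofReal (t ^ q) := by
              rw [hu, ← Real.rpow_mul ht0.le, hq]
              congr 1
              ring
      calc ∫⁻ t in Ioi c, (volume.restrict A) {x | t < ‖x‖ ^ p}
          ≤ ∫⁻ t in Ioi c, ENNReal.ofReal (t ^ q) := by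
            apply lintegral_mono_ae
            filter_upwards [ae_restrict_mem measurableSet_Ioi] with t ht
            exact hbdd t ht
        _ < ⊤ := (integrableOn_Ioi_rpow_of_lt hqlt hc0).lintegral_lt_top
    exact ENNReal.add_lt_top.mpr ⟨part1, part2⟩


lemma log_bound {y δ : ℝ} (hy : 0 < y) (hδ : 0 < δ) :
    |Real.log y| ≤ δ⁻¹ * (y ^ δ + y ^ (-δ)) := by
  have h1 : ∀ z : ℝ, 1 ≤ z → Real.log z ≤ δ⁻¹ * z ^ δ := by
    intro z hz
    have hz0 : 0 < z := lt_of_lt_of_le zero_lt_one hz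
    have : Real.log (z ^ δ) ≤ z ^ δ - 1 :=
      Real.log_le_sub_one_of_pos (Real.rpow_pos_of_pos hz0 δ)
    rw [Real.log_rpow hz0] at this
    have h2 : Real.log z ≤ δ⁻¹ * (z ^ δ - 1) := by
      rw [le_inv_mul_iff₀ hδ] at *
      linarith
    have h3 : z ^ δ - 1 ≤ z ^ δ := by linarith
    calc Real.log z ≤ δ⁻¹ * (z ^ δ - 1) := h2
      _ ≤ δ⁻¹ * z ^ δ := by
          apply mul_le_mul_of_nonneg_left h3 (inv_nonneg.mpr hδ.le)
  rcases le_or_gt 1 y with hy1 | hy1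
  · have hl : 0 ≤ Real.log y := Real.log_nonneg hy1
    rw [abs_of_nonneg hl]
    calc Real.log y ≤ δ⁻¹ * y ^ δ := h1 y hy1
      _ ≤ δ⁻¹ * (y ^ δ + y ^ (-δ)) := by
          apply mul_le_mul_of_nonneg_left _ (inv_nonneg.mpr hδ.le)
          have := Real.rpow_nonneg hy.le (-δ)
          linarith
  · have hyinv : 1 ≤ y⁻¹ := (one_le_inv_iff₀).mpr ⟨hy, hy1.le⟩
    have hl : Real.log y < 0 := Real.log_neg hy hy1
    rw [abs_of_neg hl]
    have := h1 y⁻¹ hyinv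
    rw [Real.log_inv, Real.inv_rpow hy.le] at this
    rw [← Real.rpow_neg hy.le] at this
    calc -Real.log y ≤ δ⁻¹ * y ^ (-δ) := this
      _ ≤ δ⁻¹ * (y ^ δ + y ^ (-δ)) := by
          apply mul_le_mul_of_nonneg_left _ (inv_nonneg.mpr hδ.le)
          have := Real.rpow_nonneg hy.le δ
          linarith

lemma rpow_exp_bound {y a b δ : ℝ} (hy : 0 < y) (hab : |a - b| ≤ δ) :
    y ^ a ≤ y ^ (b + δ) + y ^ (b - δ) := by
  have h1 : a ≤ b + δ := by cases abs_le.mp hab; linarith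
  have h2 : b - δ ≤ a := by cases abs_le.mp hab; linarith
  rcases le_or_gt 1 y with hy1 | hy1
  · have := Real.rpow_le_rpow_of_exponent_le hy1 h1
    have h0 := Real.rpow_nonneg hy.le (b - δ)
    linarith
  · have := Real.rpow_le_rpow_of_exponent_ge hy hy1.le h2
    have h0 := Real.rpow_nonneg hy.le (b + δ)
    linarith

lemma full_bound {y a b δ : ℝ} (hy : 0 < y) (hδ : 0 < δ) (hab : |a - b| ≤ δ) :
    y ^ a * |Real.log y| ≤ δ⁻¹ * (y ^ (b + 2*δ) + 2 * y ^ b + y ^ (b - 2*δ)) := by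
  have key : y ^ a * |Real.log y| ≤
      (y ^ (b + δ) + y ^ (b - δ)) * (δ⁻¹ * (y ^ δ + y ^ (-δ))) := by
    apply mul_le_mul (rpow_exp_bound hy hab) (log_bound hy hδ) (abs_nonneg _)
    positivity
  refine key.trans (le_of_eq ?_)
  have e1 : y ^ (b + δ) * y ^ δ = y ^ (b + 2*δ) := by
    rw [← Real.rpow_add hy]; ring_nf
  have e2 : y ^ (b + δ) * y ^ (-δ) = y ^ b := by
    rw [← Real.rpow_add hy]; ring_nf
  have e3 : y ^ (b - δ) * y ^ δ = y ^ b := by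
    rw [← Real.rpow_add hy]; ring_nf
  have e4 : y ^ (b - δ) * y ^ (-δ) = y ^ (b - 2*δ) := by
    rw [← Real.rpow_add hy]; ring_nf
  calc (y ^ (b + δ) + y ^ (b - δ)) * (δ⁻¹ * (y ^ δ + y ^ (-δ)))
      = δ⁻¹ * (y ^ (b + δ) * y ^ δ + y ^ (b + δ) * y ^ (-δ)
          + y ^ (b - δ) * y ^ δ + y ^ (b - δ) * y ^ (-δ)) := by ring
    _ = δ⁻¹ * (y ^ (b + 2*δ) + 2 * y ^ b + y ^ (b - 2*δ)) := by
        rw [e1, e2, e3, e4]; ring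

/-- For measurable `Ω ⊆ ℝ^N` with `|Ω| < ∞`, `T > 0`, and `D ∈ ℝ` with
`limsup_{t→∞} V_Ω(t)/t^{N+r} = 0` for every `r > D`: for every `s ∈ ℂ` with `Re s > D`
the function `x ↦ |x|^{-s-N}` is integrable on `{x ∈ Ω : |x| > T}`; the Lapidus zeta
function at infinity `ζ_{∞,Ω}(s) = ∫_{{x∈Ω:|x|>T}} |x|^{-s-N} dx` is holomorphic on
`{Re s > D}`; and there its derivative is `-∫_{{x∈Ω:|x|>T}} |x|^{-s-N}·log|x| dx`. -/
theorem stmt_11 (N : ℕ) (hN : 1 ≤ N)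
    (Ω : Set (EuclideanSpace ℝ (Fin N)))
    (hΩ : MeasurableSet Ω) (hfin : volume Ω < ⊤)
    (T : ℝ) (hT : 0 < T) (D : ℝ)
    (hD : ∀ r : ℝ, D < r →
      limsup (fun t : ℝ =>
        volume {x ∈ Ω | t < ‖x‖} / ENNReal.ofReal (t ^ ((N : ℝ) + r))) atTop = 0) :
    (∀ s : ℂ, D < s.re →
      IntegrableOn (fun x : EuclideanSpace ℝ (Fin N) => (‖x‖ : ℂ) ^ (-s - (N : ℂ)))
        {x ∈ Ω | T < ‖x‖} volume) ∧
    DifferentiableOn ℂ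
      (fun s : ℂ => ∫ x in {x ∈ Ω | T < ‖x‖}, (‖x‖ : ℂ) ^ (-s - (N : ℂ)))
      {s : ℂ | D < s.re} ∧
    ∀ s : ℂ, D < s.re →
      HasDerivAt (fun s : ℂ => ∫ x in {x ∈ Ω | T < ‖x‖}, (‖x‖ : ℂ) ^ (-s - (N : ℂ)))
        (-∫ x in {x ∈ Ω | T < ‖x‖},
            (‖x‖ : ℂ) ^ (-s - (N : ℂ)) * (Real.log ‖x‖ : ℂ)) s := by
  set A : Set (EuclideanSpace ℝ (Fin N)) := {x ∈ Ω | T < ‖x‖} with hAdef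
  have hA : MeasurableSet A :=
    hΩ.inter (measurableSet_lt measurable_const measurable_norm)
  have mbleF : ∀ w : ℂ, AEStronglyMeasurable
      (fun x : EuclideanSpace ℝ (Fin N) => ((‖x‖ : ℂ)) ^ w) (volume.restrict A) :=
    fun w => (((Complex.measurable_ofReal.comp measurable_norm).pow
      measurable_const)).aestronglyMeasurable
  have mbleF' : ∀ w : ℂ, AEStronglyMeasurable
      (fun x : EuclideanSpace ℝ (Fin N) => -(((‖x‖ : ℂ)) ^ w * (Real.log ‖x‖ : ℂ)))
      (volume.restrict A) :=
    fun w => ((((Complex.measurable_ofReal.comp measurable_norm).pow measurable_const).mul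
      (Complex.measurable_ofReal.comp
        (Real.measurable_log.comp measurable_norm))).neg).aestronglyMeasurable
  have hre : ∀ s : ℂ, (-s - (N:ℂ)).re = -s.re - (N:ℝ) := by intro s; simp
  have hintC : ∀ s : ℂ, D < s.re →
      IntegrableOn (fun x : EuclideanSpace ℝ (Fin N) => (‖x‖ : ℂ) ^ (-s - (N : ℂ)))
        A volume := by
    intro s hs
    have hreal := key_int N Ω hΩ hfin T hT D hD s.re hs
    refine Integrable.mono' hreal (mbleF _) ?_
    filter_upwards [ae_restrict_mem hA] with x hx
    rw [Complex.norm_cpow_eq_rpow_re_of_pos (lt_trans hT hx.2), hre]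
  have hderiv : ∀ s₀ : ℂ, D < s₀.re →
      HasDerivAt (fun s : ℂ => ∫ x in A, (‖x‖ : ℂ) ^ (-s - (N : ℂ)))
        (-∫ x in A, (‖x‖ : ℂ) ^ (-s₀ - (N : ℂ)) * (Real.log ‖x‖ : ℂ)) s₀ := by
    intro s₀ hs₀
    set δ : ℝ := (s₀.re - D) / 3 with hδdef
    have hδ : 0 < δ := by rw [hδdef]; linarith
    set b : ℝ := -s₀.re - (N:ℝ) with hbdef
    set bound : EuclideanSpace ℝ (Fin N) → ℝ :=
      fun x => δ⁻¹ * (‖x‖ ^ (b + 2*δ) + 2 * ‖x‖ ^ b + ‖x‖ ^ (b - 2*δ)) with hbound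
    have hbint : Integrable bound (volume.restrict A) := by
      have i1 := key_int N Ω hΩ hfin T hT D hD (s₀.re - 2*δ) (by rw [hδdef]; linarith)
      have i2 := key_int N Ω hΩ hfin T hT D hD s₀.re hs₀
      have i3 := key_int N Ω hΩ hfin T hT D hD (s₀.re + 2*δ) (by rw [hδdef]; linarith)
      have e1 : -(s₀.re - 2*δ) - (N:ℝ) = b + 2*δ := by rw [hbdef]; ring
      have e3 : -(s₀.re + 2*δ) - (N:ℝ) = b - 2*δ := by rw [hbdef]; ring
      rw [e1] at i1; rw [e3] at i3
      exact ((i1.add (i2.const_mul 2)).add i3).const_mul δ⁻¹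
    have key := hasDerivAt_integral_of_dominated_loc_of_deriv_le
      (μ := volume.restrict A)
      (F := fun (s : ℂ) (x : EuclideanSpace ℝ (Fin N)) => (‖x‖ : ℂ) ^ (-s - (N:ℂ)))
      (F' := fun (s : ℂ) (x : EuclideanSpace ℝ (Fin N)) =>
        -((‖x‖ : ℂ) ^ (-s - (N:ℂ)) * (Real.log ‖x‖ : ℂ)))
      (x₀ := s₀) (s := ball s₀ δ) (bound := bound) (ball_mem_nhds s₀ hδ)
      (Eventually.of_forall (fun s => mbleF _))
      (hintC s₀ hs₀) (mbleF' _) ?_ hbint ?_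
    · have h2 := key.2
      rw [integral_neg] at h2
      exact h2
    · filter_upwards [ae_restrict_mem hA] with x hx s hs
      have hx0 : 0 < ‖x‖ := lt_trans hT hx.2
      have hnorm : ‖-((‖x‖:ℂ) ^ (-s - (N:ℂ)) * (Real.log ‖x‖ : ℂ))‖
          = ‖x‖ ^ (-s.re - (N:ℝ)) * |Real.log ‖x‖| := by
        rw [norm_neg, norm_mul,
          Complex.norm_cpow_eq_rpow_re_of_pos hx0, Complex.norm_real, Real.norm_eq_abs, hre]
      rw [hnorm]
      have hab : |(-s.re - (N:ℝ)) - b| ≤ δ := by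
        rw [hbdef]
        have e : (-s.re - (N:ℝ)) - (-s₀.re - (N:ℝ)) = -(s - s₀).re := by
          rw [Complex.sub_re]; ring
        rw [e, abs_neg]
        calc |(s - s₀).re| ≤ ‖s - s₀‖ := Complex.abs_re_le_norm _
          _ ≤ δ := by rw [← Complex.dist_eq]; exact (mem_ball.mp hs).le
      exact full_bound hx0 hδ hab
    · filter_upwards [ae_restrict_mem hA] with x hx s _
      have hx0 : (0:ℝ) < ‖x‖ := lt_trans hT hx.2
      have hc : ((‖x‖ : ℝ) : ℂ) ≠ 0 := by
        exact_mod_cast hx0.ne'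
      have h1 : HasDerivAt (fun s : ℂ => -s - (N:ℂ)) (-1) s := by
        simpa using (hasDerivAt_id s).neg.sub_const (N:ℂ)
      have h2 := h1.const_cpow (c := (‖x‖:ℂ)) (Or.inl hc)
      have e : (‖x‖:ℂ) ^ (-s - (N:ℂ)) * Complex.log (‖x‖:ℂ) * (-1)
          = -((‖x‖:ℂ) ^ (-s - (N:ℂ)) * (Real.log ‖x‖ : ℂ)) := by
        rw [Complex.ofReal_log (norm_nonneg x)]; ring
      rw [e] at h2
      exact h2
  refine ⟨fun s hs => hintC s hs, ?_, fun s hs => hderiv s hs⟩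
  intro s hs
  exact (hderiv s hs).differentiableAt.differentiableWithinAt
end

section
/- Let N ≥ 1, let Ω ⊆ ℝ^N be Lebesgue measurable with |Ω| < ∞, and let T > 0. Let s, r ∈ ℝ with s < r and suppose limsup_{t→+∞} V_Ω(t)/t^{N+r} = +∞ (i.e., r, and hence s, lies strictly below the upper box dimension of Ω at infinity). Then ∫_{{x ∈ Ω : |x| > T}} |x|^{-s-N} dx = +∞ (the Lebesgue integral of this nonnegative function diverges). Combined with the holomorphy of ζ_{∞,Ω} on {Re s > dim̄_B(∞,Ω)}, this shows that the abscissa of convergence of ζ_{∞,Ω} equals the upper box dimension of Ω at infinity. -/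
open MeasureTheory Filter
open scoped Topology ENNReal

/-- For measurable `Ω ⊆ ℝ^N` with `|Ω| < ∞`, `T > 0`, and reals `s < r`
with `limsup_{t→∞} V_Ω(t)/t^{N+r} = +∞` (so `s` lies strictly below the upper box dimension
of `Ω` at infinity), the Lebesgue integral `∫_{{x∈Ω:|x|>T}} |x|^{-s-N} dx` of the
nonnegative integrand diverges, i.e. equals `+∞`. -/
theorem stmt_12 (N : ℕ) (hN : 1 ≤ N)
    (Ω : Set (EuclideanSpace ℝ (Fin N)))
    (hΩ : MeasurableSet Ω) (hfin : volume Ω < ⊤)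
    (T : ℝ) (hT : 0 < T) (s r : ℝ) (hsr : s < r)
    (hinf : limsup (fun t : ℝ =>
        volume {x ∈ Ω | t < ‖x‖} / ENNReal.ofReal (t ^ ((N : ℝ) + r))) atTop = ⊤) :
    ∫⁻ x in {x ∈ Ω | T < ‖x‖}, ENNReal.ofReal (‖x‖ ^ (-s - (N : ℝ))) = ⊤ := by
  -- Step 1: the limsup hypothesis forces `N + r < 0`.
  have hNr : (N : ℝ) + r < 0 := by
    by_contra h
    push_neg at h
    have hb : ∀ᶠ t in atTop, (volume {x ∈ Ω | t < ‖x‖} /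
        ENNReal.ofReal (t ^ ((N : ℝ) + r))) ≤ volume Ω := by
      filter_upwards [eventually_ge_atTop (1:ℝ)] with t ht
      have h1 : (1 : ℝ≥0∞) ≤ ENNReal.ofReal (t ^ ((N : ℝ) + r)) := by
        rw [show (1:ℝ≥0∞) = ENNReal.ofReal 1 by simp]
        exact ENNReal.ofReal_le_ofReal (Real.one_le_rpow ht h)
      calc volume {x ∈ Ω | t < ‖x‖} / ENNReal.ofReal (t ^ ((N : ℝ) + r))
          ≤ volume Ω / 1 := ENNReal.div_le_div (measure_mono (Set.sep_subset _ _)) h1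
        _ = volume Ω := by simp
    have hle := limsup_le_of_le (by isBoundedDefault) hb
    rw [hinf] at hle
    exact hfin.ne (top_le_iff.mp hle)
  have hsN : 0 < -s - (N : ℝ) := by linarith
  -- Step 2: show the integral exceeds every nonnegative real.
  apply ENNReal.eq_top_of_forall_nnreal_le
  intro c
  have hfreq : ∃ᶠ t in atTop, (c : ℝ≥0∞) <
      volume {x ∈ Ω | t < ‖x‖} / ENNReal.ofReal (t ^ ((N : ℝ) + r)) := by
    apply Filter.frequently_lt_of_lt_limsup (by isBoundedDefault)
    rw [hinf]; exact ENNReal.coe_lt_top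
  obtain ⟨t, htc, htT⟩ := (hfreq.and_eventually (eventually_ge_atTop (max T 1))).exists
  have hT' : T ≤ t := le_trans (le_max_left _ _) htT
  have ht1 : (1:ℝ) ≤ t := le_trans (le_max_right _ _) htT
  have ht0 : (0:ℝ) < t := lt_of_lt_of_le one_pos ht1
  set A : Set (EuclideanSpace ℝ (Fin N)) := {x ∈ Ω | t < ‖x‖} with hA
  have hsub : A ⊆ {x ∈ Ω | T < ‖x‖} := fun x hx => ⟨hx.1, lt_of_le_of_lt hT' hx.2⟩
  have hD0 : ENNReal.ofReal (t ^ ((N:ℝ) + r)) ≠ 0 := by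
    simp [ENNReal.ofReal_eq_zero, not_le]
    positivity
  have hDT : ENNReal.ofReal (t ^ ((N:ℝ) + r)) ≠ ⊤ := ENNReal.ofReal_ne_top
  have hmul : (c : ℝ≥0∞) * ENNReal.ofReal (t ^ ((N:ℝ) + r)) ≤ volume A :=
    ((ENNReal.lt_div_iff_mul_lt (Or.inl hD0) (Or.inl hDT)).mp htc).le
  have key : ENNReal.ofReal (t ^ (-s - (N:ℝ))) * volume A ≤
      ∫⁻ x in A, ENNReal.ofReal (‖x‖ ^ (-s - (N : ℝ))) := by
    rw [← setLIntegral_const A (ENNReal.ofReal (t ^ (-s - (N:ℝ))))]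
    apply setLIntegral_mono
    · exact ((continuous_norm.rpow_const (fun x => Or.inr hsN.le)).measurable).ennreal_ofReal
    · intro x hx
      exact ENNReal.ofReal_le_ofReal
        (Real.rpow_le_rpow ht0.le hx.2.le hsN.le)
  calc (c : ℝ≥0∞) = (c : ℝ≥0∞) * 1 := (mul_one _).symm
    _ ≤ (c : ℝ≥0∞) * ENNReal.ofReal (t ^ (r - s)) := by
        apply mul_le_mul_right
        rw [show (1:ℝ≥0∞) = ENNReal.ofReal 1 by simp]
        exact ENNReal.ofReal_le_ofReal (Real.one_le_rpow ht1 (by linarith))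
    _ = ENNReal.ofReal (t ^ (-s - (N:ℝ))) *
          ((c : ℝ≥0∞) * ENNReal.ofReal (t ^ ((N:ℝ) + r))) := by
        rw [show r - s = (-s - (N:ℝ)) + ((N:ℝ) + r) by ring, Real.rpow_add ht0,
          ENNReal.ofReal_mul (by positivity)]
        ring
    _ ≤ ENNReal.ofReal (t ^ (-s - (N:ℝ))) * volume A := mul_le_mul_right hmul _
    _ ≤ ∫⁻ x in A, ENNReal.ofReal (‖x‖ ^ (-s - (N : ℝ))) := key
    _ ≤ ∫⁻ x in {x ∈ Ω | T < ‖x‖}, ENNReal.ofReal (‖x‖ ^ (-s - (N : ℝ))) :=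
        lintegral_mono_set hsub
end

section
/- Let N ≥ 1, let Ω ⊆ ℝ^N be Lebesgue measurable with |Ω| < ∞, let T > 0, and let D ∈ ℝ with D < -N. Assume liminf_{t→+∞} V_Ω(t)/t^{N+D} > 0 and that for every r > D, limsup_{t→+∞} V_Ω(t)/t^{N+r} = 0 (so D = dim_B(∞,Ω) exists and the lower D-dimensional Minkowski content of Ω at infinity is positive). Then ζ_{∞,Ω}(s) = ∫_{{x ∈ Ω : |x| > T}} |x|^{-s-N} dx → +∞ as real s → D⁺. -/
open MeasureTheory Filter Set
open scoped Topology ENNReal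

private lemma lint_Ioi_rpow {q a : ℝ} (hq : q < -1) (ha : 0 < a) :
    ∫⁻ u in Set.Ioi a, ENNReal.ofReal (u ^ q) = ENNReal.ofReal (-a ^ (q + 1) / (q + 1)) := by
  rw [← MeasureTheory.ofReal_integral_eq_lintegral_ofReal
      (integrableOn_Ioi_rpow_of_lt hq ha)
      ((ae_restrict_iff' measurableSet_Ioi).2 (Filter.Eventually.of_forall fun u hu =>
        Real.rpow_nonneg (le_of_lt (ha.trans hu)) q)),
    integral_Ioi_rpow_of_lt hq ha]

/-- For measurable `Ω ⊆ ℝ^N` with `|Ω| < ∞`, `T > 0`, and `D < -N` such that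
the lower `D`-dimensional Minkowski content of `Ω` at infinity is positive and the upper
`r`-dimensional content vanishes for every `r > D` (so `D = dim_B(∞,Ω)`), the Lapidus zeta
function at infinity `ζ_{∞,Ω}(s) = ∫_{{x∈Ω:|x|>T}} |x|^{-s-N} dx` tends to `+∞` as the
real variable `s` tends to `D` from the right. -/
theorem stmt_13 (N : ℕ) (hN : 1 ≤ N)
    (Ω : Set (EuclideanSpace ℝ (Fin N)))
    (hΩ : MeasurableSet Ω) (hfin : volume Ω < ⊤)
    (T : ℝ) (hT : 0 < T) (D : ℝ) (hDN : D < -(N : ℝ))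
    (hlow : 0 < liminf (fun t : ℝ =>
        volume {x ∈ Ω | t < ‖x‖} / ENNReal.ofReal (t ^ ((N : ℝ) + D))) atTop)
    (hup : ∀ r : ℝ, D < r →
      limsup (fun t : ℝ =>
        volume {x ∈ Ω | t < ‖x‖} / ENNReal.ofReal (t ^ ((N : ℝ) + r))) atTop = 0) :
    Tendsto (fun s : ℝ => ∫ x in {x ∈ Ω | T < ‖x‖}, ‖x‖ ^ (-s - (N : ℝ)))
      (𝓝[>] D) atTop := by
  set S : Set (EuclideanSpace ℝ (Fin N)) := {x ∈ Ω | T < ‖x‖} with hSdef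
  -- get the constant from the positive lower content
  obtain ⟨c, hc0, hclt⟩ := exists_between hlow
  have hctop : c ≠ ⊤ := (hclt.trans_le le_top).ne
  have hcR : 0 < c.toReal := ENNReal.toReal_pos hc0.ne' hctop
  have hev1 : ∀ᶠ t : ℝ in atTop,
      c < volume {x ∈ Ω | t < ‖x‖} / ENNReal.ofReal (t ^ ((N : ℝ) + D)) :=
    eventually_lt_of_lt_liminf hclt
  have hev : ∀ᶠ t : ℝ in atTop,
      ENNReal.ofReal (c.toReal * t ^ ((N : ℝ) + D)) ≤ volume {x ∈ Ω | t < ‖x‖} := by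
    filter_upwards [hev1, eventually_gt_atTop (0 : ℝ)] with t h1 ht
    have hb0 : ENNReal.ofReal (t ^ ((N : ℝ) + D)) ≠ 0 := by
      simp only [ne_eq, ENNReal.ofReal_eq_zero, not_le]
      exact Real.rpow_pos_of_pos ht _
    have h2 := (ENNReal.lt_div_iff_mul_lt (Or.inl hb0) (Or.inl ENNReal.ofReal_ne_top)).1 h1
    rw [ENNReal.ofReal_mul hcR.le, ENNReal.ofReal_toReal hctop]
    exact h2.le
  obtain ⟨a₀, ha₀⟩ := eventually_atTop.1 hev
  set t₀ : ℝ := max a₀ (max T 1) with ht₀def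
  have ht₀T : T ≤ t₀ := le_trans (le_max_left _ _) (le_max_right _ _)
  have ht₀1 : (1 : ℝ) ≤ t₀ := le_trans (le_max_right _ _) (le_max_right _ _)
  have ht₀pos : (0 : ℝ) < t₀ := lt_of_lt_of_le one_pos ht₀1
  have hVlow : ∀ t ≥ t₀,
      ENNReal.ofReal (c.toReal * t ^ ((N : ℝ) + D)) ≤ volume {x ∈ Ω | t < ‖x‖} :=
    fun t ht => ha₀ t (le_trans (le_max_left _ _) ht)
  set g : ℝ → ℝ :=
    fun s => (c.toReal * t₀ ^ (D - s) * (-s - (N : ℝ))) * (s - D)⁻¹ with hgdef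
  -- the key pointwise lower bound
  have key : ∀ s ∈ Set.Ioo D (-(N : ℝ)), g s ≤ ∫ x in S, ‖x‖ ^ (-s - (N : ℝ)) := by
    intro s hs
    obtain ⟨hsD, hsN⟩ := hs
    set α : ℝ := -s - (N : ℝ) with hαdef
    have hα0 : (0 : ℝ) < α := by rw [hαdef]; linarith
    have hfm : Measurable fun x : EuclideanSpace ℝ (Fin N) => ‖x‖ ^ α :=
      measurable_norm.pow measurable_const
    have hfnn : ∀ x : EuclideanSpace ℝ (Fin N), 0 ≤ ‖x‖ ^ α :=
      fun x => Real.rpow_nonneg (norm_nonneg x) α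
    set L : ℝ≥0∞ := ∫⁻ x in S, ENNReal.ofReal (‖x‖ ^ α) with hLdef
    have hrepr : ∫ x in S, ‖x‖ ^ α = L.toReal :=
      integral_eq_lintegral_of_nonneg_ae (Filter.Eventually.of_forall hfnn)
        hfm.aestronglyMeasurable
    have hlayer : L = ∫⁻ u in Set.Ioi (0 : ℝ), (volume.restrict S) {x | u < ‖x‖ ^ α} :=
      lintegral_eq_lintegral_meas_lt _ (Filter.Eventually.of_forall hfnn) hfm.aemeasurable
    have hAmble : ∀ u : ℝ, MeasurableSet {x : EuclideanSpace ℝ (Fin N) | u < ‖x‖ ^ α} :=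
      fun u => measurableSet_lt measurable_const hfm
    have hsub : ∀ u : ℝ, 0 ≤ u →
        {x : EuclideanSpace ℝ (Fin N) | u < ‖x‖ ^ α} ∩ S ⊆ {x ∈ Ω | u ^ α⁻¹ < ‖x‖} := by
      intro u hu x hx
      obtain ⟨hx1, hx2, _⟩ := hx
      exact ⟨hx2, (Real.rpow_inv_lt_iff_of_pos hu (norm_nonneg x) hα0).2 hx1⟩
    have hseteq : ∀ u : ℝ, t₀ ^ α ≤ u →
        {x : EuclideanSpace ℝ (Fin N) | u < ‖x‖ ^ α} ∩ S = {x ∈ Ω | u ^ α⁻¹ < ‖x‖} := by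
      intro u hu
      have hu0 : (0 : ℝ) < u := lt_of_lt_of_le (Real.rpow_pos_of_pos ht₀pos α) hu
      have ht₀u : t₀ ≤ u ^ α⁻¹ := by
        calc t₀ = (t₀ ^ α) ^ α⁻¹ := (Real.rpow_rpow_inv ht₀pos.le hα0.ne').symm
          _ ≤ u ^ α⁻¹ :=
            Real.rpow_le_rpow (Real.rpow_pos_of_pos ht₀pos α).le hu (inv_nonneg.2 hα0.le)
      refine Set.Subset.antisymm (hsub u hu0.le) ?_
      rintro x ⟨hxΩ, hxlt⟩
      exact ⟨(Real.rpow_inv_lt_iff_of_pos hu0.le (norm_nonneg x) hα0).1 hxlt,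
        hxΩ, lt_of_le_of_lt (le_trans ht₀T ht₀u) hxlt⟩
    -- lower bound for L
    set q : ℝ := α⁻¹ * ((N : ℝ) + D) with hqdef
    have hαq : α * q = (N : ℝ) + D := by
      rw [hqdef, ← mul_assoc, mul_inv_cancel₀ hα0.ne', one_mul]
    have hq : q < -1 := by
      have h1 : α * q < α * (-1) := by rw [hαq, hαdef]; linarith
      exact lt_of_mul_lt_mul_left h1 hα0.le
    have ha : (0 : ℝ) < t₀ ^ α := Real.rpow_pos_of_pos ht₀pos α
    have hGlow : ∀ u ∈ Set.Ioi (t₀ ^ α),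
        ENNReal.ofReal c.toReal * ENNReal.ofReal (u ^ q)
          ≤ (volume.restrict S) {x | u < ‖x‖ ^ α} := by
      intro u hu
      rw [Measure.restrict_apply (hAmble u), hseteq u (le_of_lt hu)]
      have hu0 : (0 : ℝ) < u := ha.trans hu
      have ht₀u : t₀ ≤ u ^ α⁻¹ := by
        calc t₀ = (t₀ ^ α) ^ α⁻¹ := (Real.rpow_rpow_inv ht₀pos.le hα0.ne').symm
          _ ≤ u ^ α⁻¹ := Real.rpow_le_rpow ha.le (le_of_lt hu) (inv_nonneg.2 hα0.le)
      have h1 := hVlow (u ^ α⁻¹) ht₀u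
      calc ENNReal.ofReal c.toReal * ENNReal.ofReal (u ^ q)
          = ENNReal.ofReal (c.toReal * (u ^ α⁻¹) ^ ((N : ℝ) + D)) := by
            rw [ENNReal.ofReal_mul hcR.le, hqdef, Real.rpow_mul hu0.le]
        _ ≤ volume {x ∈ Ω | u ^ α⁻¹ < ‖x‖} := h1
    have hlowL : ENNReal.ofReal c.toReal * ENNReal.ofReal (-(t₀ ^ α) ^ (q + 1) / (q + 1))
        ≤ L := by
      have h4 : ∫⁻ u in Set.Ioi (t₀ ^ α),
            ENNReal.ofReal c.toReal * ENNReal.ofReal (u ^ q)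
          = ENNReal.ofReal c.toReal * ENNReal.ofReal (-(t₀ ^ α) ^ (q + 1) / (q + 1)) := by
        rw [lintegral_const_mul _ ((measurable_id'.pow_const q).ennreal_ofReal),
          lint_Ioi_rpow hq ha]
      calc ENNReal.ofReal c.toReal * ENNReal.ofReal (-(t₀ ^ α) ^ (q + 1) / (q + 1))
          = ∫⁻ u in Set.Ioi (t₀ ^ α),
              ENNReal.ofReal c.toReal * ENNReal.ofReal (u ^ q) := h4.symm
        _ ≤ ∫⁻ u in Set.Ioi (t₀ ^ α), (volume.restrict S) {x | u < ‖x‖ ^ α} :=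
            setLIntegral_mono' measurableSet_Ioi hGlow
        _ ≤ ∫⁻ u in Set.Ioi (0 : ℝ), (volume.restrict S) {x | u < ‖x‖ ^ α} :=
            lintegral_mono_set (Set.Ioi_subset_Ioi ha.le)
        _ = L := hlayer.symm
    -- finiteness of L
    set r : ℝ := (D + s) / 2 with hrdef
    have hDr : D < r := by rw [hrdef]; linarith
    have hrs : r < s := by rw [hrdef]; linarith
    have hev2 : ∀ᶠ t : ℝ in atTop,
        volume {x ∈ Ω | t < ‖x‖} / ENNReal.ofReal (t ^ ((N : ℝ) + r)) < 1 :=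
      eventually_lt_of_limsup_lt (by rw [hup r hDr]; exact zero_lt_one)
    have hev3 : ∀ᶠ t : ℝ in atTop,
        volume {x ∈ Ω | t < ‖x‖} ≤ ENNReal.ofReal (t ^ ((N : ℝ) + r)) := by
      filter_upwards [hev2, eventually_gt_atTop (0 : ℝ)] with t h1 ht
      have hb0 : ENNReal.ofReal (t ^ ((N : ℝ) + r)) ≠ 0 := by
        simp only [ne_eq, ENNReal.ofReal_eq_zero, not_le]
        exact Real.rpow_pos_of_pos ht _
      have h2 := (ENNReal.div_lt_iff (Or.inl hb0) (Or.inl ENNReal.ofReal_ne_top)).1 h1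
      simpa using h2.le
    obtain ⟨a₁, ha₁⟩ := eventually_atTop.1 hev3
    set t₁ : ℝ := max a₁ t₀ with ht₁def
    have ht₁0 : (0 : ℝ) < t₁ := lt_of_lt_of_le ht₀pos (le_max_right _ _)
    have hVup : ∀ t ≥ t₁, volume {x ∈ Ω | t < ‖x‖} ≤ ENNReal.ofReal (t ^ ((N : ℝ) + r)) :=
      fun t ht => ha₁ t (le_trans (le_max_left _ _) ht)
    set q' : ℝ := α⁻¹ * ((N : ℝ) + r) with hq'def
    have hαq' : α * q' = (N : ℝ) + r := by
      rw [hq'def, ← mul_assoc, mul_inv_cancel₀ hα0.ne', one_mul]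
    have hq' : q' < -1 := by
      have h1 : α * q' < α * (-1) := by rw [hαq', hαdef]; linarith
      exact lt_of_mul_lt_mul_left h1 hα0.le
    have hb : (0 : ℝ) < t₁ ^ α := Real.rpow_pos_of_pos ht₁0 α
    have hGup : ∀ u ∈ Set.Ioi (t₁ ^ α),
        (volume.restrict S) {x | u < ‖x‖ ^ α} ≤ ENNReal.ofReal (u ^ q') := by
      intro u hu
      have hu0 : (0 : ℝ) < u := hb.trans hu
      rw [Measure.restrict_apply (hAmble u)]
      have ht₁u : t₁ ≤ u ^ α⁻¹ := by
        calc t₁ = (t₁ ^ α) ^ α⁻¹ := (Real.rpow_rpow_inv ht₁0.le hα0.ne').symm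
          _ ≤ u ^ α⁻¹ := Real.rpow_le_rpow hb.le (le_of_lt hu) (inv_nonneg.2 hα0.le)
      calc volume ({x | u < ‖x‖ ^ α} ∩ S)
          ≤ volume {x ∈ Ω | u ^ α⁻¹ < ‖x‖} := measure_mono (hsub u hu0.le)
        _ ≤ ENNReal.ofReal ((u ^ α⁻¹) ^ ((N : ℝ) + r)) := hVup _ ht₁u
        _ = ENNReal.ofReal (u ^ q') := by rw [hq'def, Real.rpow_mul hu0.le]
    have hLne : L ≠ ⊤ := by
      have hsplit : L ≤ (∫⁻ u in Set.Ioc (0 : ℝ) (t₁ ^ α),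
            (volume.restrict S) {x | u < ‖x‖ ^ α})
          + ∫⁻ u in Set.Ioi (t₁ ^ α), (volume.restrict S) {x | u < ‖x‖ ^ α} := by
        rw [hlayer]
        exact le_trans (lintegral_mono_set Set.Ioi_subset_Ioc_union_Ioi)
          (lintegral_union_le _ _ _)
      have h5 : ∫⁻ u in Set.Ioc (0 : ℝ) (t₁ ^ α), (volume.restrict S) {x | u < ‖x‖ ^ α}
          ≤ volume Ω * ENNReal.ofReal (t₁ ^ α) := by
        calc ∫⁻ u in Set.Ioc (0 : ℝ) (t₁ ^ α), (volume.restrict S) {x | u < ‖x‖ ^ α}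
            ≤ ∫⁻ _ in Set.Ioc (0 : ℝ) (t₁ ^ α), volume Ω :=
              setLIntegral_mono' measurableSet_Ioc (fun u _ => by
                rw [Measure.restrict_apply (hAmble u)]
                exact measure_mono fun x hx => hx.2.1)
          _ = volume Ω * volume (Set.Ioc (0 : ℝ) (t₁ ^ α)) := setLIntegral_const _ _
          _ = volume Ω * ENNReal.ofReal (t₁ ^ α) := by rw [Real.volume_Ioc, sub_zero]
      have h6 : ∫⁻ u in Set.Ioi (t₁ ^ α), (volume.restrict S) {x | u < ‖x‖ ^ α}
          ≤ ENNReal.ofReal (-(t₁ ^ α) ^ (q' + 1) / (q' + 1)) := by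
        rw [← lint_Ioi_rpow hq' hb]
        exact setLIntegral_mono' measurableSet_Ioi hGup
      refine ne_top_of_le_ne_top ?_ hsplit
      exact (ENNReal.add_lt_top.2
        ⟨lt_of_le_of_lt h5 (ENNReal.mul_lt_top hfin ENNReal.ofReal_lt_top),
         lt_of_le_of_lt h6 ENNReal.ofReal_lt_top⟩).ne
    -- identify the lower bound with g s
    have hE : -(t₀ ^ α) ^ (q + 1) / (q + 1) = t₀ ^ (D - s) * α * (s - D)⁻¹ := by
      have e1 : (t₀ ^ α) ^ (q + 1) = t₀ ^ (D - s) := by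
        rw [← Real.rpow_mul ht₀pos.le]
        congr 1
        have h7 : α * (q + 1) = α * q + α := by ring
        rw [h7, hαq, hαdef]; ring
      have e2 : q + 1 = α⁻¹ * (D - s) := by
        have h8 : α * (q + 1) = α * (α⁻¹ * (D - s)) := by
          rw [mul_add, hαq, ← mul_assoc, mul_inv_cancel₀ hα0.ne', one_mul, hαdef]; ring
        exact mul_left_cancel₀ hα0.ne' h8
      rw [e1, e2, show α⁻¹ * (D - s) = -(α⁻¹ * (s - D)) by ring, div_neg, neg_div, neg_neg,
        div_eq_mul_inv, mul_inv, inv_inv]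
      ring
    have hgs : g s = c.toReal * (-(t₀ ^ α) ^ (q + 1) / (q + 1)) := by
      rw [hE, hgdef]
      have : α = -s - (N : ℝ) := hαdef
      rw [this]; ring
    have h7 : ENNReal.ofReal (g s) ≤ L := by
      rw [hgs, ENNReal.ofReal_mul hcR.le]
      exact hlowL
    rw [hrepr]
    exact (ENNReal.ofReal_le_iff_le_toReal hLne).1 h7
  -- tendsto of the lower bound g
  have h₁ : Tendsto (fun s : ℝ => t₀ ^ (D - s)) (𝓝[>] D) (𝓝 1) := by
    have hc1 : ContinuousAt (fun y : ℝ => t₀ ^ y) 0 :=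
      Real.continuousAt_const_rpow ht₀pos.ne'
    have h2 : Tendsto (fun s : ℝ => D - s) (𝓝[>] D) (𝓝 (D - D)) :=
      ((continuous_const.sub continuous_id).tendsto D).mono_left nhdsWithin_le_nhds
    rw [sub_self] at h2
    simpa [Function.comp_def] using hc1.tendsto.comp h2
  have h₂ : Tendsto (fun s : ℝ => c.toReal * t₀ ^ (D - s) * (-s - (N : ℝ))) (𝓝[>] D)
      (𝓝 (c.toReal * 1 * (-D - (N : ℝ)))) := by
    refine (tendsto_const_nhds.mul h₁).mul ?_
    exact ((continuous_id.neg.sub continuous_const).tendsto D).mono_left nhdsWithin_le_nhds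
  have h₃ : Tendsto (fun s : ℝ => (s - D)⁻¹) (𝓝[>] D) atTop := by
    apply tendsto_inv_nhdsGT_zero.comp
    apply tendsto_nhdsWithin_of_tendsto_nhds_of_eventually_within
    · have h2 : Tendsto (fun s : ℝ => s - D) (𝓝[>] D) (𝓝 (D - D)) :=
        ((continuous_id.sub continuous_const).tendsto D).mono_left nhdsWithin_le_nhds
      rwa [sub_self] at h2
    · exact eventually_mem_nhdsWithin.mono fun s hs => Set.mem_Ioi.2 (sub_pos.2 hs)
  have hg : Tendsto g (𝓝[>] D) atTop := by
    refine Filter.Tendsto.pos_mul_atTop ?_ h₂ h₃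
    have : (0 : ℝ) < -D - (N : ℝ) := by linarith
    positivity
  refine tendsto_atTop_mono' _ ?_ hg
  filter_upwards [Ioo_mem_nhdsGT_of_mem (Set.left_mem_Ico.2 hDN)] with s hs
  exact key s hs
end

section
/- Let N ≥ 1, let Ω ⊆ ℝ^N be Lebesgue measurable with |Ω| < ∞, let T > 0, and let D ∈ ℝ with D < -N. Assume Ω is Minkowski nondegenerate at infinity in dimension D, i.e., 0 < M_^D(∞,Ω) := liminf_{t→+∞} V_Ω(t)/t^{N+D} ≤ M̄^D(∞,Ω) := limsup_{t→+∞} V_Ω(t)/t^{N+D} < ∞. Then, with ζ_{∞,Ω}(s) := ∫_{{x ∈ Ω : |x| > T}} |x|^{-s-N} dx for real s > D (these integrals are finite), one has -(N+D)·M_^D(∞,Ω) ≤ liminf_{s→D⁺} (s-D)·ζ_{∞,Ω}(s) and limsup_{s→D⁺} (s-D)·ζ_{∞,Ω}(s) ≤ -(N+D)·M̄^D(∞,Ω). (In particular, if ζ_{∞,Ω} admits a meromorphic continuation to a neighborhood of D, then D is a simple pole and its residue lies between -(N+D)·M_^D(∞,Ω) and -(N+D)·M̄^D(∞,Ω).)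 -/
open MeasureTheory Filter Set
open scoped Topology ENNReal

private lemma aux_repr {N : ℕ} {A : Set (EuclideanSpace ℝ (Fin N))}
    {p : ℝ} (hp : 0 < p) :
    ∫⁻ x in A, ENNReal.ofReal (‖x‖ ^ p) =
      ENNReal.ofReal p * ∫⁻ t in Ioi (0:ℝ),
        volume ({x : EuclideanSpace ℝ (Fin N) | t < ‖x‖} ∩ A) * ENNReal.ofReal (t ^ (p - 1)) := by
  have h := lintegral_rpow_eq_lintegral_meas_lt_mul (volume.restrict A)
    (f := fun x : EuclideanSpace ℝ (Fin N) => ‖x‖)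
    (Filter.Eventually.of_forall fun x => norm_nonneg x) measurable_norm.aemeasurable hp
  rw [h]
  congr 1
  refine lintegral_congr fun t => ?_
  rw [Measure.restrict_apply (measurableSet_lt measurable_const measurable_norm)]

private lemma aux_tail {D s T₀ c : ℝ} (hT₀ : 0 < T₀) (hc : 0 ≤ c) (hs : D < s) :
    ∫⁻ t in Ioi T₀, ENNReal.ofReal (c * t ^ (D - s - 1)) =
      ENNReal.ofReal (c * (T₀ ^ (D - s) / (s - D))) := by
  have hlt : D - s - 1 < -1 := by linarith
  have hint : IntegrableOn (fun t : ℝ => c * t ^ (D - s - 1)) (Ioi T₀) :=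
    (integrableOn_Ioi_rpow_of_lt hlt hT₀).const_mul c
  have hnn : 0 ≤ᵐ[volume.restrict (Ioi T₀)] fun t : ℝ => c * t ^ (D - s - 1) := by
    filter_upwards [self_mem_ae_restrict measurableSet_Ioi] with t ht
    exact mul_nonneg hc (Real.rpow_nonneg (hT₀.trans ht).le _)
  rw [← ofReal_integral_eq_lintegral_ofReal hint hnn]
  congr 1
  rw [integral_const_mul, integral_Ioi_rpow_of_lt hlt hT₀,
    show D - s - 1 + 1 = D - s by ring, show D - s = -(s - D) by ring, neg_div_neg_eq]

private lemma aux_upper {N : ℕ} {A : Set (EuclideanSpace ℝ (Fin N))}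
    (hAfin : volume A < ⊤) {D T₀ C : ℝ} (hT₀ : 0 < T₀) (hC : 0 ≤ C)
    (hW : ∀ t : ℝ, T₀ ≤ t → volume ({x : EuclideanSpace ℝ (Fin N) | t < ‖x‖} ∩ A)
          ≤ ENNReal.ofReal (C * t ^ ((N : ℝ) + D)))
    {s : ℝ} (hs : D < s) (hs' : s < -(N : ℝ)) :
    ∫⁻ x in A, ENNReal.ofReal (‖x‖ ^ (-s - (N : ℝ))) ≤
      ENNReal.ofReal (((s - D) * (volume A).toReal * T₀ ^ (-s - (N : ℝ))
        + (-s - (N : ℝ)) * C * T₀ ^ (D - s)) / (s - D)) := by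
  have hp : 0 < -s - (N : ℝ) := by linarith
  have hsD : (0:ℝ) < s - D := sub_pos.2 hs
  rw [aux_repr hp]
  rw [show Ioi (0:ℝ) = Ioc 0 T₀ ∪ Ioi T₀ from (Ioc_union_Ioi_eq_Ioi hT₀.le).symm,
    lintegral_union measurableSet_Ioi Ioc_disjoint_Ioi_same]
  have hint1 : IntegrableOn (fun t : ℝ => t ^ (-s - (N : ℝ) - 1)) (Ioc 0 T₀) :=
    (intervalIntegral.intervalIntegrable_rpow'
      (by linarith : (-1:ℝ) < -s - (N : ℝ) - 1)).1
  have hnn1 : 0 ≤ᵐ[volume.restrict (Ioc (0:ℝ) T₀)] fun t : ℝ => t ^ (-s - (N : ℝ) - 1) := by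
    filter_upwards [self_mem_ae_restrict measurableSet_Ioc] with t ht
    exact Real.rpow_nonneg ht.1.le _
  have hval1 : ∫ t in Ioc (0:ℝ) T₀, t ^ (-s - (N : ℝ) - 1) = T₀ ^ (-s - (N : ℝ)) / (-s - (N : ℝ)) := by
    rw [← intervalIntegral.integral_of_le hT₀.le,
      integral_rpow (Or.inl (by linarith : (-1:ℝ) < -s - (N : ℝ) - 1)),
      show -s - (N : ℝ) - 1 + 1 = -s - (N : ℝ) by ring, Real.zero_rpow hp.ne', sub_zero]
  have hb1 : ∫⁻ t in Ioc (0:ℝ) T₀,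
      volume ({x : EuclideanSpace ℝ (Fin N) | t < ‖x‖} ∩ A) * ENNReal.ofReal (t ^ (-s - (N : ℝ) - 1))
      ≤ ENNReal.ofReal ((volume A).toReal * (T₀ ^ (-s - (N : ℝ)) / (-s - (N : ℝ)))) := by
    calc ∫⁻ t in Ioc (0:ℝ) T₀,
        volume ({x : EuclideanSpace ℝ (Fin N) | t < ‖x‖} ∩ A) * ENNReal.ofReal (t ^ (-s - (N : ℝ) - 1))
        ≤ ∫⁻ t in Ioc (0:ℝ) T₀, volume A * ENNReal.ofReal (t ^ (-s - (N : ℝ) - 1)) :=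
          setLIntegral_mono' measurableSet_Ioc fun t _ =>
            mul_le_mul_left (measure_mono inter_subset_right) _
      _ = volume A * ∫⁻ t in Ioc (0:ℝ) T₀, ENNReal.ofReal (t ^ (-s - (N : ℝ) - 1)) :=
          lintegral_const_mul' _ _ hAfin.ne
      _ = volume A * ENNReal.ofReal (∫ t in Ioc (0:ℝ) T₀, t ^ (-s - (N : ℝ) - 1)) := by
          rw [ofReal_integral_eq_lintegral_ofReal hint1 hnn1]
      _ = ENNReal.ofReal ((volume A).toReal * (T₀ ^ (-s - (N : ℝ)) / (-s - (N : ℝ)))) := by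
          rw [hval1]
          conv_lhs => rw [← ENNReal.ofReal_toReal hAfin.ne]
          rw [← ENNReal.ofReal_mul ENNReal.toReal_nonneg]
  have hb2 : ∫⁻ t in Ioi T₀,
      volume ({x : EuclideanSpace ℝ (Fin N) | t < ‖x‖} ∩ A) * ENNReal.ofReal (t ^ (-s - (N : ℝ) - 1))
      ≤ ENNReal.ofReal (C * (T₀ ^ (D - s) / (s - D))) := by
    calc ∫⁻ t in Ioi T₀,
        volume ({x : EuclideanSpace ℝ (Fin N) | t < ‖x‖} ∩ A) * ENNReal.ofReal (t ^ (-s - (N : ℝ) - 1))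
        ≤ ∫⁻ t in Ioi T₀, ENNReal.ofReal (C * t ^ (D - s - 1)) := by
          refine setLIntegral_mono' measurableSet_Ioi fun t ht => ?_
          have h0t : (0:ℝ) < t := hT₀.trans ht
          calc volume ({x : EuclideanSpace ℝ (Fin N) | t < ‖x‖} ∩ A)
                * ENNReal.ofReal (t ^ (-s - (N : ℝ) - 1))
              ≤ ENNReal.ofReal (C * t ^ ((N : ℝ) + D)) * ENNReal.ofReal (t ^ (-s - (N : ℝ) - 1)) :=
                mul_le_mul_left (hW t (le_of_lt ht)) _
            _ = ENNReal.ofReal (C * t ^ (D - s - 1)) := by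
                rw [← ENNReal.ofReal_mul (mul_nonneg hC (Real.rpow_nonneg h0t.le _))]
                congr 1
                rw [mul_assoc, ← Real.rpow_add h0t]
                congr 2
                ring
      _ = ENNReal.ofReal (C * (T₀ ^ (D - s) / (s - D))) := aux_tail hT₀ hC hs
  refine le_trans (mul_le_mul_right (add_le_add hb1 hb2) (ENNReal.ofReal (-s - (N : ℝ)))) (le_of_eq ?_)
  rw [← ENNReal.ofReal_add
      (mul_nonneg ENNReal.toReal_nonneg (div_nonneg (Real.rpow_nonneg hT₀.le _) hp.le))
      (mul_nonneg hC (div_nonneg (Real.rpow_nonneg hT₀.le _) hsD.le)),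
    ← ENNReal.ofReal_mul hp.le]
  congr 1
  field_simp

private lemma aux_lower {N : ℕ} {A : Set (EuclideanSpace ℝ (Fin N))}
    {D T₀ c : ℝ} (hT₀ : 0 < T₀) (hc : 0 ≤ c)
    (hW : ∀ t : ℝ, T₀ ≤ t → ENNReal.ofReal (c * t ^ ((N : ℝ) + D))
          ≤ volume ({x : EuclideanSpace ℝ (Fin N) | t < ‖x‖} ∩ A))
    {s : ℝ} (hs : D < s) (hs' : s < -(N : ℝ)) :
    ENNReal.ofReal ((-s - (N : ℝ)) * (c * (T₀ ^ (D - s) / (s - D)))) ≤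
      ∫⁻ x in A, ENNReal.ofReal (‖x‖ ^ (-s - (N : ℝ))) := by
  have hp : 0 < -s - (N : ℝ) := by linarith
  rw [aux_repr hp, ENNReal.ofReal_mul hp.le]
  refine mul_le_mul_right ?_ _
  calc ENNReal.ofReal (c * (T₀ ^ (D - s) / (s - D)))
      = ∫⁻ t in Ioi T₀, ENNReal.ofReal (c * t ^ (D - s - 1)) := (aux_tail hT₀ hc hs).symm
    _ ≤ ∫⁻ t in Ioi T₀,
        volume ({x : EuclideanSpace ℝ (Fin N) | t < ‖x‖} ∩ A) * ENNReal.ofReal (t ^ (-s - (N : ℝ) - 1)) := by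
        refine setLIntegral_mono' measurableSet_Ioi fun t ht => ?_
        have h0t : (0:ℝ) < t := hT₀.trans ht
        calc ENNReal.ofReal (c * t ^ (D - s - 1))
            = ENNReal.ofReal (c * t ^ ((N : ℝ) + D)) * ENNReal.ofReal (t ^ (-s - (N : ℝ) - 1)) := by
              rw [← ENNReal.ofReal_mul (mul_nonneg hc (Real.rpow_nonneg h0t.le _))]
              congr 1
              rw [mul_assoc, ← Real.rpow_add h0t]
              congr 2
              ring
          _ ≤ volume ({x : EuclideanSpace ℝ (Fin N) | t < ‖x‖} ∩ A)
                * ENNReal.ofReal (t ^ (-s - (N : ℝ) - 1)) :=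
              mul_le_mul_left (hW t (le_of_lt ht)) _
    _ ≤ ∫⁻ t in Ioi (0:ℝ),
        volume ({x : EuclideanSpace ℝ (Fin N) | t < ‖x‖} ∩ A) * ENNReal.ofReal (t ^ (-s - (N : ℝ) - 1)) :=
        lintegral_mono_set (Ioi_subset_Ioi hT₀.le)

/-- For measurable `Ω ⊆ ℝ^N` with `|Ω| < ∞`, `T > 0`, and `D < -N`, if `Ω`
is Minkowski nondegenerate at infinity in dimension `D`, i.e.
`0 < M_^D(∞,Ω) ≤ M̄^D(∞,Ω) < ∞`, then the integrals
`ζ_{∞,Ω}(s) = ∫_{{x∈Ω:|x|>T}} |x|^{-s-N} dx` are finite for real `s > D` and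
`-(N+D)·M_^D(∞,Ω) ≤ liminf_{s→D⁺} (s-D)·ζ_{∞,Ω}(s)` and
`limsup_{s→D⁺} (s-D)·ζ_{∞,Ω}(s) ≤ -(N+D)·M̄^D(∞,Ω)`. -/
theorem stmt_14 (N : ℕ) (hN : 1 ≤ N)
    (Ω : Set (EuclideanSpace ℝ (Fin N)))
    (hΩ : MeasurableSet Ω) (hfin : volume Ω < ⊤)
    (T : ℝ) (hT : 0 < T) (D : ℝ) (hDN : D < -(N : ℝ))
    (hlow : 0 < liminf (fun t : ℝ =>
        volume {x ∈ Ω | t < ‖x‖} / ENNReal.ofReal (t ^ ((N : ℝ) + D))) atTop)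
    (hup : limsup (fun t : ℝ =>
        volume {x ∈ Ω | t < ‖x‖} / ENNReal.ofReal (t ^ ((N : ℝ) + D))) atTop < ⊤) :
    (∀ s : ℝ, D < s →
      IntegrableOn (fun x : EuclideanSpace ℝ (Fin N) => ‖x‖ ^ (-s - (N : ℝ)))
        {x ∈ Ω | T < ‖x‖} volume) ∧
    -((N : ℝ) + D) *
        (liminf (fun t : ℝ =>
          volume {x ∈ Ω | t < ‖x‖} / ENNReal.ofReal (t ^ ((N : ℝ) + D))) atTop).toReal ≤
      liminf (fun s : ℝ =>
        (s - D) * ∫ x in {x ∈ Ω | T < ‖x‖}, ‖x‖ ^ (-s - (N : ℝ))) (𝓝[>] D) ∧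
    limsup (fun s : ℝ =>
        (s - D) * ∫ x in {x ∈ Ω | T < ‖x‖}, ‖x‖ ^ (-s - (N : ℝ))) (𝓝[>] D) ≤
      -((N : ℝ) + D) *
        (limsup (fun t : ℝ =>
          volume {x ∈ Ω | t < ‖x‖} / ENNReal.ofReal (t ^ ((N : ℝ) + D))) atTop).toReal := by
  classical
  set A := {x ∈ Ω | T < ‖x‖} with hAdef
  set G : ℝ → ℝ≥0∞ := fun t =>
    volume {x ∈ Ω | t < ‖x‖} / ENNReal.ofReal (t ^ ((N : ℝ) + D)) with hGdef
  set f : ℝ → ℝ := fun s => (s - D) * ∫ x in A, ‖x‖ ^ (-s - (N : ℝ)) with hfdef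
  set L := liminf G atTop with hLdef
  set U := limsup G atTop with hUdef
  have hAsub : A ⊆ Ω := fun x hx => hx.1
  have hAmeas : MeasurableSet A :=
    hΩ.inter (measurableSet_lt measurable_const measurable_norm)
  have hAfin : volume A < ⊤ := lt_of_le_of_lt (measure_mono hAsub) hfin
  have hinter_le : ∀ t : ℝ,
      volume ({x : EuclideanSpace ℝ (Fin N) | t < ‖x‖} ∩ A) ≤ volume {x ∈ Ω | t < ‖x‖} := by
    intro t
    apply measure_mono
    rintro x ⟨hx1, hx2, _⟩
    exact ⟨hx2, hx1⟩
  have hinter_ge : ∀ t : ℝ, T ≤ t →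
      volume {x ∈ Ω | t < ‖x‖} ≤ volume ({x : EuclideanSpace ℝ (Fin N) | t < ‖x‖} ∩ A) := by
    intro t ht
    apply measure_mono
    rintro x ⟨hx1, hx2⟩
    exact ⟨hx2, hx1, lt_of_le_of_lt ht hx2⟩
  have hLU : L ≤ U := liminf_le_limsup
  have hUne : U ≠ ⊤ := hup.ne
  have hLne : L ≠ ⊤ := (lt_of_le_of_lt hLU hup).ne
  have hLtR : 0 < L.toReal := ENNReal.toReal_pos hlow.ne' hLne
  -- extraction of upper data
  have hupdata : ∀ Ur : ℝ, U < ENNReal.ofReal Ur → ∃ t' : ℝ, 0 < t' ∧ T ≤ t' ∧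
      ∀ t : ℝ, t' ≤ t → volume ({x : EuclideanSpace ℝ (Fin N) | t < ‖x‖} ∩ A)
        ≤ ENNReal.ofReal (Ur * t ^ ((N : ℝ) + D)) := by
    intro Ur hUr
    have hUr0 : 0 < Ur := ENNReal.ofReal_pos.mp ((zero_le : (0:ℝ≥0∞) ≤ U).trans_lt hUr)
    have hev : ∀ᶠ t in atTop, G t < ENNReal.ofReal Ur := eventually_lt_of_limsup_lt hUr
    obtain ⟨t₀, ht₀⟩ := eventually_atTop.mp (hev.and (eventually_ge_atTop (max T 1)))
    refine ⟨max t₀ (max T 1), lt_of_lt_of_le zero_lt_one ((le_max_right T 1).trans (le_max_right _ _)),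
      (le_max_left T 1).trans (le_max_right _ _), fun t ht => ?_⟩
    obtain ⟨hg, htT1⟩ := ht₀ t ((le_max_left _ _).trans ht)
    have htpos : (0:ℝ) < t := lt_of_lt_of_le zero_lt_one (le_trans (le_max_right T 1) htT1)
    have hb0 : ENNReal.ofReal (t ^ ((N : ℝ) + D)) ≠ 0 := by
      simp only [ne_eq, ENNReal.ofReal_eq_zero, not_le]
      exact Real.rpow_pos_of_pos htpos _
    have hbtop : ENNReal.ofReal (t ^ ((N : ℝ) + D)) ≠ ⊤ := ENNReal.ofReal_ne_top
    calc volume ({x : EuclideanSpace ℝ (Fin N) | t < ‖x‖} ∩ A)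
        ≤ volume {x ∈ Ω | t < ‖x‖} := hinter_le t
      _ = volume {x ∈ Ω | t < ‖x‖} / ENNReal.ofReal (t ^ ((N : ℝ) + D))
            * ENNReal.ofReal (t ^ ((N : ℝ) + D)) := (ENNReal.div_mul_cancel hb0 hbtop).symm
      _ ≤ ENNReal.ofReal Ur * ENNReal.ofReal (t ^ ((N : ℝ) + D)) := by
            refine mul_le_mul_left ?_ _
            exact le_of_lt hg
      _ = ENNReal.ofReal (Ur * t ^ ((N : ℝ) + D)) := (ENNReal.ofReal_mul hUr0.le).symm
  -- extraction of lower data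
  have hlowdata : ∀ Lr : ℝ, 0 ≤ Lr → ENNReal.ofReal Lr < L → ∃ t' : ℝ, 0 < t' ∧ T ≤ t' ∧
      ∀ t : ℝ, t' ≤ t → ENNReal.ofReal (Lr * t ^ ((N : ℝ) + D))
        ≤ volume ({x : EuclideanSpace ℝ (Fin N) | t < ‖x‖} ∩ A) := by
    intro Lr hLr0 hLr
    have hev : ∀ᶠ t in atTop, ENNReal.ofReal Lr < G t := eventually_lt_of_lt_liminf hLr
    obtain ⟨t₀, ht₀⟩ := eventually_atTop.mp (hev.and (eventually_ge_atTop (max T 1)))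
    refine ⟨max t₀ (max T 1), lt_of_lt_of_le zero_lt_one ((le_max_right T 1).trans (le_max_right _ _)),
      (le_max_left T 1).trans (le_max_right _ _), fun t ht => ?_⟩
    obtain ⟨hg, htT1⟩ := ht₀ t ((le_max_left _ _).trans ht)
    have htT : T ≤ t := le_trans (le_max_left T 1) htT1
    have htpos : (0:ℝ) < t := lt_of_lt_of_le zero_lt_one (le_trans (le_max_right T 1) htT1)
    have hb0 : ENNReal.ofReal (t ^ ((N : ℝ) + D)) ≠ 0 := by
      simp only [ne_eq, ENNReal.ofReal_eq_zero, not_le]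
      exact Real.rpow_pos_of_pos htpos _
    have hbtop : ENNReal.ofReal (t ^ ((N : ℝ) + D)) ≠ ⊤ := ENNReal.ofReal_ne_top
    calc ENNReal.ofReal (Lr * t ^ ((N : ℝ) + D))
        = ENNReal.ofReal Lr * ENNReal.ofReal (t ^ ((N : ℝ) + D)) := ENNReal.ofReal_mul hLr0
      _ ≤ volume {x ∈ Ω | t < ‖x‖} / ENNReal.ofReal (t ^ ((N : ℝ) + D))
            * ENNReal.ofReal (t ^ ((N : ℝ) + D)) := mul_le_mul_left (le_of_lt hg) _
      _ = volume {x ∈ Ω | t < ‖x‖} := ENNReal.div_mul_cancel hb0 hbtop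
      _ ≤ volume ({x : EuclideanSpace ℝ (Fin N) | t < ‖x‖} ∩ A) := hinter_ge t htT
  -- fixed upper data for finiteness
  have hU1 : U < ENNReal.ofReal (U.toReal + 1) := by
    calc U = ENNReal.ofReal U.toReal := (ENNReal.ofReal_toReal hUne).symm
      _ < ENNReal.ofReal (U.toReal + 1) := by
          refine (ENNReal.ofReal_lt_ofReal_iff ?_).2 (lt_add_one _)
          positivity
  obtain ⟨t₀, ht₀pos, ht₀T, hW₀⟩ := hupdata (U.toReal + 1) hU1
  have hC₀ : (0:ℝ) ≤ U.toReal + 1 := by positivity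
  have hFlt : ∀ s : ℝ, D < s → s < -(N : ℝ) →
      ∫⁻ x in A, ENNReal.ofReal (‖x‖ ^ (-s - (N : ℝ))) < ⊤ := fun s hs hs' =>
    lt_of_le_of_lt (aux_upper hAfin ht₀pos hC₀ hW₀ hs hs') ENNReal.ofReal_lt_top
  have hmeas_int : ∀ s : ℝ, AEStronglyMeasurable
      (fun x : EuclideanSpace ℝ (Fin N) => ‖x‖ ^ (-s - (N : ℝ))) (volume.restrict A) :=
    fun s => (measurable_norm.pow_const _).aestronglyMeasurable
  -- integrability
  have hint : ∀ s : ℝ, D < s →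
      IntegrableOn (fun x : EuclideanSpace ℝ (Fin N) => ‖x‖ ^ (-s - (N : ℝ))) A volume := by
    intro s hs
    refine ⟨hmeas_int s, (hasFiniteIntegral_iff_ofReal
      (Filter.Eventually.of_forall fun x => Real.rpow_nonneg (norm_nonneg x) _)).2 ?_⟩
    rcases lt_or_ge s (-(N : ℝ)) with hs' | hs'
    · exact hFlt s hs hs'
    · calc ∫⁻ x in A, ENNReal.ofReal (‖x‖ ^ (-s - (N : ℝ)))
          ≤ ∫⁻ _x in A, ENNReal.ofReal (T ^ (-s - (N : ℝ))) := by
            refine setLIntegral_mono' hAmeas fun x hx => ?_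
            refine ENNReal.ofReal_le_ofReal ?_
            exact Real.rpow_le_rpow_of_nonpos hT (le_of_lt hx.2) (by linarith)
        _ = ENNReal.ofReal (T ^ (-s - (N : ℝ))) * volume A := setLIntegral_const _ _
        _ < ⊤ := ENNReal.mul_lt_top ENNReal.ofReal_lt_top hAfin
  have hIeq : ∀ s : ℝ, (∫ x in A, ‖x‖ ^ (-s - (N : ℝ)))
      = (∫⁻ x in A, ENNReal.ofReal (‖x‖ ^ (-s - (N : ℝ)))).toReal := fun s =>
    integral_eq_lintegral_of_nonneg_ae
      (Filter.Eventually.of_forall fun x => Real.rpow_nonneg (norm_nonneg x) _) (hmeas_int s)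
  have hmem : Ioo D (-(N : ℝ)) ∈ 𝓝[>] D := Ioo_mem_nhdsGT_of_mem ⟨le_refl D, hDN⟩
  have hf_nonneg : ∀ᶠ s in 𝓝[>] D, 0 ≤ f s := by
    filter_upwards [self_mem_nhdsWithin] with s hs
    exact mul_nonneg (sub_nonneg.2 (le_of_lt hs))
      (integral_nonneg fun x => Real.rpow_nonneg (norm_nonneg x) _)
  -- upper key eventual bound
  have hkey_upper : ∀ (Cr t' : ℝ), 0 < t' → 0 ≤ Cr →
      (∀ t : ℝ, t' ≤ t → volume ({x : EuclideanSpace ℝ (Fin N) | t < ‖x‖} ∩ A)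
        ≤ ENNReal.ofReal (Cr * t ^ ((N : ℝ) + D))) →
      ∀ᶠ s in 𝓝[>] D, f s ≤ (s - D) * (volume A).toReal * t' ^ (-s - (N : ℝ))
        + (-s - (N : ℝ)) * Cr * t' ^ (D - s) := by
    intro Cr t' ht' hCr hWb
    refine Filter.eventually_of_mem hmem fun s hs => ?_
    have hDs : D < s := hs.1
    have hsN : s < -(N : ℝ) := hs.2
    have h1 : (0:ℝ) < s - D := sub_pos.2 hDs
    have h2 : (0:ℝ) < -s - (N : ℝ) := by linarith
    have hb := aux_upper hAfin ht' hCr hWb hDs hsN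
    have hBnn : 0 ≤ ((s - D) * (volume A).toReal * t' ^ (-s - (N : ℝ))
        + (-s - (N : ℝ)) * Cr * t' ^ (D - s)) / (s - D) := by
      apply div_nonneg _ h1.le
      apply add_nonneg
      · exact mul_nonneg (mul_nonneg h1.le ENNReal.toReal_nonneg) (Real.rpow_nonneg ht'.le _)
      · exact mul_nonneg (mul_nonneg h2.le hCr) (Real.rpow_nonneg ht'.le _)
    have htR := ENNReal.toReal_le_of_le_ofReal hBnn hb
    have : f s = (s - D) * (∫⁻ x in A, ENNReal.ofReal (‖x‖ ^ (-s - (N : ℝ)))).toReal := by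
      rw [hfdef]
      simp only
      rw [hIeq s]
    rw [this]
    calc (s - D) * (∫⁻ x in A, ENNReal.ofReal (‖x‖ ^ (-s - (N : ℝ)))).toReal
        ≤ (s - D) * (((s - D) * (volume A).toReal * t' ^ (-s - (N : ℝ))
          + (-s - (N : ℝ)) * Cr * t' ^ (D - s)) / (s - D)) :=
          mul_le_mul_of_nonneg_left htR h1.le
      _ = (s - D) * (volume A).toReal * t' ^ (-s - (N : ℝ))
          + (-s - (N : ℝ)) * Cr * t' ^ (D - s) := by
          rw [mul_comm, div_mul_cancel₀ _ h1.ne']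
  -- tendsto of the bound functions
  have hcont_rpow : ∀ t' : ℝ, 0 < t' → Continuous fun s : ℝ => t' ^ s := by
    intro t' ht'
    have hrw : ∀ y : ℝ, t' ^ y = Real.exp (Real.log t' * y) := fun y =>
      Real.rpow_def_of_pos ht' y
    simp only [hrw]
    exact Real.continuous_exp.comp (continuous_const.mul continuous_id)
  have hTend_upper : ∀ (Cr t' : ℝ), 0 < t' →
      Tendsto (fun s : ℝ => (s - D) * (volume A).toReal * t' ^ (-s - (N : ℝ))
        + (-s - (N : ℝ)) * Cr * t' ^ (D - s)) (𝓝[>] D) (𝓝 ((-D - (N : ℝ)) * Cr)) := by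
    intro Cr t' ht'
    have hcont : Continuous fun s : ℝ => (s - D) * (volume A).toReal * t' ^ (-s - (N : ℝ))
        + (-s - (N : ℝ)) * Cr * t' ^ (D - s) := by
      refine Continuous.add ?_ ?_
      · exact (((continuous_id.sub continuous_const).mul continuous_const).mul
          ((hcont_rpow t' ht').comp (continuous_id.neg.sub continuous_const)))
      · exact ((continuous_id.neg.sub continuous_const).mul continuous_const).mul
          ((hcont_rpow t' ht').comp (continuous_const.sub continuous_id))
    have h := (hcont.tendsto D).mono_left (nhdsWithin_le_nhds (s := Set.Ioi D))
    simpa [sub_self, Real.rpow_zero] using h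
  have hTend_lower : ∀ (Cr t' : ℝ), 0 < t' →
      Tendsto (fun s : ℝ => (-s - (N : ℝ)) * Cr * t' ^ (D - s)) (𝓝[>] D)
        (𝓝 ((-D - (N : ℝ)) * Cr)) := by
    intro Cr t' ht'
    have hcont : Continuous fun s : ℝ => (-s - (N : ℝ)) * Cr * t' ^ (D - s) :=
      ((continuous_id.neg.sub continuous_const).mul continuous_const).mul
        ((hcont_rpow t' ht').comp (continuous_const.sub continuous_id))
    have h := (hcont.tendsto D).mono_left (nhdsWithin_le_nhds (s := Set.Ioi D))
    simpa [sub_self, Real.rpow_zero] using h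
  have hbdd_above : IsBoundedUnder (· ≤ ·) (𝓝[>] D) f := by
    have hev := hkey_upper (U.toReal + 1) t₀ ht₀pos hC₀ hW₀
    exact IsBoundedUnder.mono_le (hTend_upper (U.toReal + 1) t₀ ht₀pos).isBoundedUnder_le hev
  have hNDpos : (0:ℝ) < -((N : ℝ) + D) := by linarith
  -- limsup bound
  have hlimsup : limsup f (𝓝[>] D) ≤ -((N : ℝ) + D) * U.toReal := by
    refine le_of_forall_gt_imp_ge_of_dense fun c hc => ?_
    have h1 : U.toReal < c / (-((N : ℝ) + D)) := (lt_div_iff₀ hNDpos).2 (by linarith)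
    obtain ⟨Ur, hUr1, hUr2⟩ := exists_between h1
    have hUrU : U < ENNReal.ofReal Ur := by
      calc U = ENNReal.ofReal U.toReal := (ENNReal.ofReal_toReal hUne).symm
        _ < ENNReal.ofReal Ur := by
            refine (ENNReal.ofReal_lt_ofReal_iff ?_).2 hUr1
            exact lt_of_le_of_lt ENNReal.toReal_nonneg hUr1
    obtain ⟨t', ht'pos, ht'T, hWb⟩ := hupdata Ur hUrU
    have hUr0 : 0 ≤ Ur := le_trans ENNReal.toReal_nonneg hUr1.le
    have hev := hkey_upper Ur t' ht'pos hUr0 hWb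
    have hlt : (-D - (N : ℝ)) * Ur < c := by
      have h3 : Ur * (-((N : ℝ) + D)) < c := (lt_div_iff₀ hNDpos).1 hUr2
      linarith
    have hev2 := (hTend_upper Ur t' ht'pos).eventually_lt_const hlt
    refine limsup_le_of_le (isCoboundedUnder_le_of_eventually_le _ hf_nonneg) ?_
    filter_upwards [hev, hev2] with s hs1 hs2
    exact hs1.trans hs2.le
  -- liminf bound
  have hliminf : -((N : ℝ) + D) * L.toReal ≤ liminf f (𝓝[>] D) := by
    refine le_of_forall_lt_imp_le_of_dense fun c hc => ?_
    have h1 : c / (-((N : ℝ) + D)) < L.toReal := (div_lt_iff₀ hNDpos).2 (by linarith)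
    have h2 : max (c / (-((N : ℝ) + D))) 0 < L.toReal := max_lt h1 hLtR
    obtain ⟨Lr, hLr1, hLr2⟩ := exists_between h2
    have hLr0 : 0 ≤ Lr := le_trans (le_max_right _ _) hLr1.le
    have hLrL : ENNReal.ofReal Lr < L := by
      calc ENNReal.ofReal Lr < ENNReal.ofReal L.toReal :=
            (ENNReal.ofReal_lt_ofReal_iff hLtR).2 hLr2
        _ = L := ENNReal.ofReal_toReal hLne
    obtain ⟨t', ht'pos, ht'T, hWb⟩ := hlowdata Lr hLr0 hLrL
    have hev : ∀ᶠ s in 𝓝[>] D, (-s - (N : ℝ)) * Lr * t' ^ (D - s) ≤ f s := by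
      refine Filter.eventually_of_mem hmem fun s hs => ?_
      have hDs : D < s := hs.1
      have hsN : s < -(N : ℝ) := hs.2
      have h1' : (0:ℝ) < s - D := sub_pos.2 hDs
      have h2' : (0:ℝ) < -s - (N : ℝ) := by linarith
      have hb := aux_lower ht'pos hLr0 hWb hDs hsN
      have hfin' := (hFlt s hDs hsN).ne
      have h3 := ENNReal.toReal_mono hfin' hb
      rw [ENNReal.toReal_ofReal (mul_nonneg h2'.le (mul_nonneg hLr0
        (div_nonneg (Real.rpow_nonneg ht'pos.le _) h1'.le)))] at h3
      have h4 := mul_le_mul_of_nonneg_left h3 h1'.le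
      have h5 : f s = (s - D) * (∫⁻ x in A, ENNReal.ofReal (‖x‖ ^ (-s - (N : ℝ)))).toReal := by
        rw [hfdef]
        simp only
        rw [hIeq s]
      rw [h5]
      calc (-s - (N : ℝ)) * Lr * t' ^ (D - s)
          = (s - D) * ((-s - (N : ℝ)) * (Lr * (t' ^ (D - s) / (s - D)))) := by
            field_simp
        _ ≤ _ := h4
    have hclt : c < (-D - (N : ℝ)) * Lr := by
      have h3 : c / (-((N : ℝ) + D)) < Lr := lt_of_le_of_lt (le_max_left _ _) hLr1
      have h4 : c < Lr * (-((N : ℝ) + D)) := (div_lt_iff₀ hNDpos).1 h3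
      linarith
    have hev2 := (hTend_lower Lr t' ht'pos).eventually_const_lt hclt
    refine le_liminf_of_le (IsBoundedUnder.isCoboundedUnder_ge hbdd_above) ?_
    filter_upwards [hev, hev2] with s hs1 hs2
    exact hs2.le.trans hs1
  exact ⟨fun s hs => hint s hs, hliminf, hlimsup⟩
end

section
/- Let N ≥ 1, let Ω ⊆ ℝ^N be Lebesgue measurable with |Ω| < ∞, let T > 0, and let D ∈ ℝ with D < -N. Assume Ω is Minkowski measurable at infinity with dimension D and content M ∈ (0,∞), i.e., V_Ω(t)/t^{N+D} → M as t → +∞. Then, with ζ_{∞,Ω}(s) := ∫_{{x ∈ Ω : |x| > T}} |x|^{-s-N} dx for real s > D, one has (s-D)·ζ_{∞,Ω}(s) → -(N+D)·M as s → D⁺. (In particular, if ζ_{∞,Ω} admits a meromorphic continuation to a neighborhood of D, then its residue at the simple pole D equals -(N+D)·M^D(∞,Ω).) -/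
open MeasureTheory Filter
open scoped Topology ENNReal
open Set

lemma aux_layer (N : ℕ) (Ω : Set (EuclideanSpace ℝ (Fin N))) (hΩ : MeasurableSet Ω)
    (hfin : volume Ω < ⊤) (T : ℝ) (hT : 0 < T) (p : ℝ) (hp : 0 < p) :
    ∫⁻ x in {x ∈ Ω | T < ‖x‖}, ENNReal.ofReal (‖x‖ ^ p) =
      volume {x ∈ Ω | T < ‖x‖} * ENNReal.ofReal (T ^ p)
        + ∫⁻ t in Ioi T, volume {x ∈ Ω | t < ‖x‖} * ENNReal.ofReal (p * t ^ (p - 1)) := by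
  set A := {x ∈ Ω | T < ‖x‖} with hA
  have hAm : MeasurableSet A := hΩ.inter (measurableSet_lt measurable_const measurable_norm)
  have hAfin : volume A < ⊤ := lt_of_le_of_lt (measure_mono (sep_subset _ _)) hfin
  have hg : ∀ r : ℝ, 0 ≤ r → ∫ t in (0)..r, p * t ^ (p - 1) = r ^ p := by
    intro r hr
    rw [intervalIntegral.integral_const_mul, integral_rpow (Or.inl (by linarith))]
    rw [sub_add_cancel, Real.zero_rpow hp.ne']
    field_simp
    simp
  have g_intble : ∀ t > (0:ℝ), IntervalIntegrable (fun t => p * t ^ (p - 1)) volume 0 t := by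
    intro t ht
    exact (intervalIntegral.intervalIntegrable_rpow' (by linarith)).const_mul p
  have g_nn : ∀ᵐ t ∂(volume.restrict (Ioi (0:ℝ))), 0 ≤ p * t ^ (p - 1) := by
    filter_upwards [ae_restrict_mem measurableSet_Ioi] with t ht
    exact mul_nonneg hp.le (Real.rpow_nonneg (le_of_lt ht) _)
  have key := lintegral_comp_eq_lintegral_meas_lt_mul (volume.restrict A)
      (f := fun x => ‖x‖) (g := fun t => p * t ^ (p - 1))
      (Eventually.of_forall fun x => norm_nonneg x) measurable_norm.aemeasurable g_intble g_nn
  have hL : ∫⁻ x in A, ENNReal.ofReal (‖x‖ ^ p) =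
      ∫⁻ t in Ioi 0, (volume.restrict A) {a | t < ‖a‖} * ENNReal.ofReal (p * t ^ (p - 1)) := by
    rw [← key]
    apply lintegral_congr fun x => ?_
    rw [hg ‖x‖ (norm_nonneg x)]
  rw [hL]
  have hrestr : ∀ t : ℝ, (volume.restrict A) {a | t < ‖a‖} = volume ({a | t < ‖a‖} ∩ A) :=
    fun t => Measure.restrict_apply (measurableSet_lt measurable_const measurable_norm)
  simp_rw [hrestr]
  rw [← Ioc_union_Ioi_eq_Ioi hT.le, lintegral_union measurableSet_Ioi (Set.Ioc_disjoint_Ioi le_rfl)]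
  congr 1
  · have h1 : ∀ t ∈ Ioc (0:ℝ) T, volume ({a | t < ‖a‖} ∩ A) * ENNReal.ofReal (p * t ^ (p - 1))
        = volume A * ENNReal.ofReal (p * t ^ (p - 1)) := by
      intro t ht
      congr 2
      apply inter_eq_self_of_subset_right
      intro x hx
      exact lt_of_le_of_lt ht.2 hx.2
    rw [setLIntegral_congr_fun measurableSet_Ioc h1,
      lintegral_const_mul' _ _ hAfin.ne]
    congr 1
    rw [← ofReal_integral_eq_lintegral_ofReal]
    · congr 1
      rw [← intervalIntegral.integral_of_le hT.le, hg T hT.le]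
    · exact (g_intble T hT).1
    · filter_upwards [ae_restrict_mem measurableSet_Ioc] with t ht
      exact mul_nonneg hp.le (Real.rpow_nonneg ht.1.le _)
  · apply setLIntegral_congr_fun measurableSet_Ioi
    intro t ht
    beta_reduce
    congr 2
    ext x
    simp only [mem_inter_iff, mem_setOf_eq, mem_sep_iff, hA]
    constructor
    · rintro ⟨h1, h2, _⟩; exact ⟨h2, h1⟩
    · rintro ⟨h1, h2⟩; exact ⟨h2, h1, lt_trans ht h2⟩

lemma aux_rpow_exp {a : ℝ} (ha : 0 < a) {q q1 q2 : ℝ} (h1 : q1 ≤ q) (h2 : q ≤ q2) :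
    a ^ q ≤ a ^ q1 + a ^ q2 := by
  rcases le_total 1 a with h | h
  · exact le_add_of_nonneg_of_le (Real.rpow_pos_of_pos ha _).le
      (Real.rpow_le_rpow_of_exponent_le h h2)
  · exact le_add_of_le_of_nonneg (Real.rpow_le_rpow_of_exponent_ge ha h h1)
      (Real.rpow_pos_of_pos ha _).le

lemma aux_rpow_base {t T b q : ℝ} (hT : 0 < T) (h1 : T ≤ t) (h2 : t ≤ b) :
    t ^ q ≤ T ^ q + b ^ q := by
  rcases le_total 0 q with h | h
  · exact le_add_of_nonneg_of_le (Real.rpow_pos_of_pos hT q).le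
      (Real.rpow_le_rpow (by linarith) h2 h)
  · exact le_add_of_le_of_nonneg (Real.rpow_le_rpow_of_nonpos hT h1 h)
      (Real.rpow_pos_of_pos (by linarith) q).le

set_option maxHeartbeats 1000000 in
/-- For measurable `Ω ⊆ ℝ^N` with `|Ω| < ∞`, `T > 0`, and `D < -N`, if `Ω`
is Minkowski measurable at infinity with dimension `D` and content `M ∈ (0,∞)`, i.e.
`V_Ω(t)/t^{N+D} → M` as `t → +∞`, then with
`ζ_{∞,Ω}(s) = ∫_{{x∈Ω:|x|>T}} |x|^{-s-N} dx` for real `s > D` one has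
`(s-D)·ζ_{∞,Ω}(s) → -(N+D)·M` as `s → D⁺`. -/
theorem stmt_15 (N : ℕ) (hN : 1 ≤ N)
    (Ω : Set (EuclideanSpace ℝ (Fin N)))
    (hΩ : MeasurableSet Ω) (hfin : volume Ω < ⊤)
    (T : ℝ) (hT : 0 < T) (D : ℝ) (hDN : D < -(N : ℝ))
    (M : ℝ) (hM : 0 < M)
    (hmink : Tendsto (fun t : ℝ =>
        (volume {x ∈ Ω | t < ‖x‖}).toReal / t ^ ((N : ℝ) + D)) atTop (𝓝 M)) :
    Tendsto (fun s : ℝ =>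
        (s - D) * ∫ x in {x ∈ Ω | T < ‖x‖}, ‖x‖ ^ (-s - (N : ℝ)))
      (𝓝[>] D) (𝓝 (-((N : ℝ) + D) * M)) := by
  set A := {x ∈ Ω | T < ‖x‖} with hA
  have hAm : MeasurableSet A := hΩ.inter (measurableSet_lt measurable_const measurable_norm)
  have hAfin : volume A < ⊤ := lt_of_le_of_lt (measure_mono (sep_subset _ _)) hfin
  set Vr : ℝ → ℝ := fun t => (volume {x ∈ Ω | t < ‖x‖}).toReal with hVr
  have hWfin : ∀ t : ℝ, volume {x ∈ Ω | t < ‖x‖} < ⊤ :=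
    fun t => lt_of_le_of_lt (measure_mono (sep_subset _ _)) hfin
  have hVnn : ∀ t, 0 ≤ Vr t := fun t => ENNReal.toReal_nonneg
  have hVanti : Antitone Vr := by
    intro t t' h
    apply (ENNReal.toReal_le_toReal (hWfin t').ne (hWfin t).ne).mpr
    exact measure_mono fun x hx => ⟨hx.1, lt_of_le_of_lt h hx.2⟩
  have hVmble : Measurable Vr := hVanti.measurable
  set C := (volume Ω).toReal with hC
  have hVC : ∀ t, Vr t ≤ C := fun t =>
    (ENNReal.toReal_le_toReal (hWfin t).ne hfin.ne).mpr (measure_mono (sep_subset _ _))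
  -- Minkowski two-sided bounds
  have hbound : ∀ η : ℝ, 0 < η → ∃ t₀ : ℝ, (max T 1 < t₀) ∧ ∀ t, t₀ ≤ t →
      (M - η) * t ^ ((N:ℝ) + D) ≤ Vr t ∧ Vr t ≤ (M + η) * t ^ ((N:ℝ) + D) := by
    intro η hη
    have h1 : ∀ᶠ t in atTop, |Vr t / t ^ ((N:ℝ) + D) - M| < η := by
      have := Metric.tendsto_nhds.mp hmink η hη
      simpa [Real.dist_eq] using this
    obtain ⟨a, ha⟩ := eventually_atTop.mp (h1.and (eventually_gt_atTop (max T 1)))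
    refine ⟨max a (max T 1 + 1), lt_of_lt_of_le (lt_add_one _) (le_max_right _ _), ?_⟩
    intro t ht
    obtain ⟨habs, hmax⟩ := ha t (le_trans (le_max_left _ _) ht)
    have htpos : 0 < t := by
      have h1 : max T 1 + 1 ≤ t := le_trans (le_max_right _ _) ht
      have h2 : (1:ℝ) ≤ max T 1 := le_max_right _ _
      linarith
    have hpow : 0 < t ^ ((N:ℝ) + D) := Real.rpow_pos_of_pos htpos _
    rw [abs_lt] at habs
    constructor
    · calc (M - η) * t ^ ((N:ℝ) + D) ≤ (Vr t / t ^ ((N:ℝ) + D)) * t ^ ((N:ℝ) + D) :=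
          mul_le_mul_of_nonneg_right (by linarith [habs.1]) hpow.le
        _ = Vr t := div_mul_cancel₀ _ hpow.ne'
    · calc Vr t = (Vr t / t ^ ((N:ℝ) + D)) * t ^ ((N:ℝ) + D) := (div_mul_cancel₀ _ hpow.ne').symm
        _ ≤ (M + η) * t ^ ((N:ℝ) + D) :=
          mul_le_mul_of_nonneg_right (by linarith [habs.2]) hpow.le
  obtain ⟨t₁, ht₁gt, hVt₁⟩ := hbound 1 one_pos
  have ht₁T : T < t₁ := lt_of_le_of_lt (le_max_left _ _) ht₁gt
  have ht₁pos : (0:ℝ) < t₁ := lt_of_le_of_lt (lt_max_iff.mpr (Or.inr one_pos)).le ht₁gt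
  have hrpow_mble : ∀ q : ℝ, Measurable fun t : ℝ => Vr t * t ^ q := by
    intro q
    exact hVmble.mul (by fun_prop)
  -- integrability of the tail integrand, for any parameters
  have hIntIoc : ∀ q : ℝ, ∀ b : ℝ, IntegrableOn (fun t => Vr t * t ^ q) (Ioc T b) volume := by
    intro q b
    apply Integrable.mono' (g := fun _ => C * (T ^ q + b ^ q))
      (integrableOn_const measure_Ioc_lt_top.ne)
      ((hrpow_mble q).aestronglyMeasurable)
    filter_upwards [ae_restrict_mem measurableSet_Ioc] with t ht
    rw [Real.norm_eq_abs, abs_of_nonneg (mul_nonneg (hVnn t) (Real.rpow_nonneg (by linarith [ht.1]) q))]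
    exact mul_le_mul (hVC t) (aux_rpow_base hT ht.1.le ht.2) (Real.rpow_nonneg (by linarith [ht.1]) q)
      ((hVnn t).trans (hVC t))
  have hIntIoi : ∀ s : ℝ, D < s → ∀ b : ℝ, t₁ ≤ b → ∀ K : ℝ, 0 ≤ K →
      (∀ t, b ≤ t → Vr t ≤ K * t ^ ((N:ℝ) + D)) →
      IntegrableOn (fun t => Vr t * t ^ (-s - (N:ℝ) - 1)) (Ioi b) volume := by
    intro s hs b hb K hK hKb
    have hbpos : 0 < b := lt_of_lt_of_le ht₁pos hb
    apply Integrable.mono' (g := fun t => K * t ^ (D - s - 1))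
      ((integrableOn_Ioi_rpow_of_lt (by linarith) hbpos).const_mul K)
      ((hrpow_mble _).aestronglyMeasurable)
    filter_upwards [ae_restrict_mem measurableSet_Ioi] with t ht
    have htpos : 0 < t := lt_trans hbpos ht
    rw [Real.norm_eq_abs, abs_of_nonneg (mul_nonneg (hVnn t) (Real.rpow_nonneg htpos.le _))]
    calc Vr t * t ^ (-s - (N:ℝ) - 1) ≤ (K * t ^ ((N:ℝ) + D)) * t ^ (-s - (N:ℝ) - 1) :=
        mul_le_mul_of_nonneg_right (hKb t ht.le) (Real.rpow_nonneg htpos.le _)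
      _ = K * t ^ (D - s - 1) := by
        rw [mul_assoc, ← Real.rpow_add htpos]
        ring_nf
  have hInt : ∀ s : ℝ, D < s → IntegrableOn (fun t => Vr t * t ^ (-s - (N:ℝ) - 1)) (Ioi T) volume := by
    intro s hs
    rw [← Ioc_union_Ioi_eq_Ioi ht₁T.le]
    exact (hIntIoc _ t₁).union (hIntIoi s hs t₁ le_rfl (M + 1) (by linarith)
      (fun t ht => (hVt₁ t ht).2))
  -- the real-valued identity
  have hGnn : ∀ s : ℝ, 0 ≤ ∫ t in Ioi T, Vr t * t ^ (-s - (N:ℝ) - 1) := by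
    intro s
    apply setIntegral_nonneg measurableSet_Ioi
    intro t ht
    exact mul_nonneg (hVnn t) (Real.rpow_nonneg (by linarith [mem_Ioi.mp ht]) _)
  have hzeta : ∀ s ∈ Ioo D (-(N:ℝ)),
      ∫ x in A, ‖x‖ ^ (-s - (N:ℝ)) =
        (volume A).toReal * T ^ (-s - (N:ℝ))
          + (-s - (N:ℝ)) * ∫ t in Ioi T, Vr t * t ^ (-s - (N:ℝ) - 1) := by
    intro s hs
    have hp : 0 < -s - (N:ℝ) := by
      have := hs.2; linarith
    have hnn : 0 ≤ᵐ[volume.restrict A] fun x => ‖x‖ ^ (-s - (N:ℝ)) :=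
      ae_of_all _ fun x => Real.rpow_nonneg (norm_nonneg x) _
    have hmble : AEMeasurable (fun x : EuclideanSpace ℝ (Fin N) => ‖x‖ ^ (-s - (N:ℝ)))
        (volume.restrict A) := by fun_prop
    rw [integral_eq_lintegral_of_nonneg_ae hnn hmble.aestronglyMeasurable]
    rw [aux_layer N Ω hΩ hfin T hT _ hp]
    have hJ : ∫⁻ t in Ioi T, volume {x ∈ Ω | t < ‖x‖}
          * ENNReal.ofReal ((-s - (N:ℝ)) * t ^ (-s - (N:ℝ) - 1))
        = ENNReal.ofReal ((-s - (N:ℝ)) * ∫ t in Ioi T, Vr t * t ^ (-s - (N:ℝ) - 1)) := by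
      have heq : ∀ᵐ t ∂(volume.restrict (Ioi T)),
          volume {x ∈ Ω | t < ‖x‖} * ENNReal.ofReal ((-s - (N:ℝ)) * t ^ (-s - (N:ℝ) - 1))
            = ENNReal.ofReal ((-s - (N:ℝ)) * (Vr t * t ^ (-s - (N:ℝ) - 1))) := by
        filter_upwards [ae_restrict_mem measurableSet_Ioi] with t ht
        rw [← ENNReal.ofReal_toReal (hWfin t).ne, ← ENNReal.ofReal_mul (hVnn t)]
        congr 1
        ring
      rw [lintegral_congr_ae heq, ← ofReal_integral_eq_lintegral_ofReal]
      · congr 1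
        rw [integral_const_mul]
      · exact ((hInt s hs.1).const_mul _)
      · filter_upwards [ae_restrict_mem measurableSet_Ioi] with t ht
        exact mul_nonneg hp.le (mul_nonneg (hVnn t) (Real.rpow_nonneg (by linarith [mem_Ioi.mp ht]) _))
    rw [hJ, ENNReal.toReal_add (ENNReal.mul_ne_top hAfin.ne ENNReal.ofReal_ne_top)
      ENNReal.ofReal_ne_top, ENNReal.toReal_mul, ENNReal.toReal_ofReal (Real.rpow_nonneg hT.le _),
      ENNReal.toReal_ofReal (mul_nonneg hp.le (hGnn s))]
  -- value of the model tail integral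
  have htail : ∀ s : ℝ, D < s → ∀ b : ℝ, 0 < b →
      ∫ t in Ioi b, t ^ (D - s - 1) = b ^ (D - s) / (s - D) := by
    intro s hs b hb
    rw [integral_Ioi_rpow_of_lt (by linarith) hb, show D - s - 1 + 1 = D - s by ring,
      div_eq_div_iff (show D - s ≠ 0 by intro h; rw [sub_eq_zero] at h; linarith)
        (show s - D ≠ 0 by intro h; rw [sub_eq_zero] at h; linarith)]
    ring
  -- the main limit
  have h3 : Tendsto (fun s => (s - D) * ∫ t in Ioi T, Vr t * t ^ (-s - (N:ℝ) - 1))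
      (𝓝[>] D) (𝓝 M) := by
    rw [Metric.tendsto_nhdsWithin_nhds]
    intro ε hε
    set η := min (ε / 3) (M / 2) with hη_def
    have hη : 0 < η := lt_min (by linarith) (by linarith)
    have hηε : η ≤ ε / 3 := min_le_left _ _
    have hηM : η ≤ M / 2 := min_le_right _ _
    obtain ⟨t₀, ht₀gt, hVb⟩ := hbound η hη
    have ht₀T : T < t₀ := lt_of_le_of_lt (le_max_left _ _) ht₀gt
    have ht₀1 : (1:ℝ) < t₀ := lt_of_le_of_lt (le_max_right _ _) ht₀gt
    have ht₀pos : (0:ℝ) < t₀ := lt_trans one_pos ht₀1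
    have hlog : 0 < Real.log t₀ := Real.log_pos ht₀1
    set B₀ := T ^ (-1:ℝ) + T ^ (-D - (N:ℝ) - 1) + (t₀ ^ (-1:ℝ) + t₀ ^ (-D - (N:ℝ) - 1)) with hB₀_def
    have hB₀pos : 0 < B₀ := by
      have := Real.rpow_pos_of_pos hT (-1:ℝ)
      have := Real.rpow_pos_of_pos hT (-D - (N:ℝ) - 1)
      have := Real.rpow_pos_of_pos ht₀pos (-1:ℝ)
      have := Real.rpow_pos_of_pos ht₀pos (-D - (N:ℝ) - 1)
      linarith
    have hB₀ : ∀ q : ℝ, -1 ≤ q → q ≤ -D - (N:ℝ) - 1 → ∀ t, T ≤ t → t ≤ t₀ → t ^ q ≤ B₀ := by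
      intro q hq1 hq2 t h1 h2
      calc t ^ q ≤ T ^ q + t₀ ^ q := aux_rpow_base hT h1 h2
        _ ≤ B₀ := add_le_add (aux_rpow_exp hT hq1 hq2) (aux_rpow_exp ht₀pos hq1 hq2)
    set δ := min (-(N:ℝ) - D) (min (η / ((M + 1) * Real.log t₀ + 1)) (η / (C * B₀ * (t₀ - T) + 1)))
      with hδ_def
    have hCB : 0 ≤ C * B₀ * (t₀ - T) :=
      mul_nonneg (mul_nonneg ENNReal.toReal_nonneg hB₀pos.le) (by linarith)
    have hδpos : 0 < δ := by
      apply lt_min (by linarith)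
      apply lt_min
      · apply div_pos hη
        have : 0 < (M + 1) * Real.log t₀ := mul_pos (by linarith) hlog
        linarith
      · exact div_pos hη (by linarith)
    refine ⟨δ, hδpos, ?_⟩
    intro s hs hsd
    rw [Real.dist_eq] at hsd
    have hsD : 0 < s - D := sub_pos.mpr hs
    have hsdlt : s - D < δ := lt_of_le_of_lt (le_abs_self _) hsd
    have hsN : s < -(N:ℝ) := by
      have := min_le_left (-(N:ℝ) - D) (min (η / ((M + 1) * Real.log t₀ + 1))
        (η / (C * B₀ * (t₀ - T) + 1)))
      rw [← hδ_def] at this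
      linarith
    have hδ2 : δ ≤ η / ((M + 1) * Real.log t₀ + 1) :=
      le_trans (min_le_right _ _) (min_le_left _ _)
    have hδ3 : δ ≤ η / (C * B₀ * (t₀ - T) + 1) :=
      le_trans (min_le_right _ _) (min_le_right _ _)
    set q := -s - (N:ℝ) - 1 with hq_def
    have hq1 : -1 < q := by rw [hq_def]; linarith
    have hq2 : q ≤ -D - (N:ℝ) - 1 := by rw [hq_def]; linarith
    -- split the integral
    have hI1 : IntegrableOn (fun t => Vr t * t ^ q) (Ioc T t₀) volume := hIntIoc q t₀
    have hMη : 0 ≤ M - η := by linarith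
    have hI2 : IntegrableOn (fun t => Vr t * t ^ q) (Ioi t₀) volume := by
      apply Integrable.mono' (g := fun t => (M + η) * t ^ (D - s - 1))
        ((integrableOn_Ioi_rpow_of_lt (by linarith) ht₀pos).const_mul _)
        ((hrpow_mble _).aestronglyMeasurable)
      filter_upwards [ae_restrict_mem measurableSet_Ioi] with t ht
      have htpos : 0 < t := lt_trans ht₀pos ht
      rw [Real.norm_eq_abs, abs_of_nonneg (mul_nonneg (hVnn t) (Real.rpow_nonneg htpos.le _))]
      calc Vr t * t ^ q ≤ ((M + η) * t ^ ((N:ℝ) + D)) * t ^ q :=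
          mul_le_mul_of_nonneg_right (hVb t ht.le).2 (Real.rpow_nonneg htpos.le _)
        _ = (M + η) * t ^ (D - s - 1) := by
          rw [mul_assoc, ← Real.rpow_add htpos, hq_def]
          ring_nf
    have hsplit : ∫ t in Ioi T, Vr t * t ^ q
        = (∫ t in Ioc T t₀, Vr t * t ^ q) + ∫ t in Ioi t₀, Vr t * t ^ q := by
      rw [← setIntegral_union (Set.Ioc_disjoint_Ioi le_rfl) measurableSet_Ioi hI1 hI2,
        Ioc_union_Ioi_eq_Ioi ht₀T.le]
    -- bounds on I1
    have hI1nn : 0 ≤ ∫ t in Ioc T t₀, Vr t * t ^ q := by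
      apply setIntegral_nonneg measurableSet_Ioc
      intro t ht
      exact mul_nonneg (hVnn t) (Real.rpow_nonneg (by linarith [ht.1]) _)
    have hI1le : ∫ t in Ioc T t₀, Vr t * t ^ q ≤ C * B₀ * (t₀ - T) := by
      calc ∫ t in Ioc T t₀, Vr t * t ^ q ≤ ∫ _ in Ioc T t₀, C * B₀ := by
            apply setIntegral_mono_on hI1 (integrableOn_const measure_Ioc_lt_top.ne)
              measurableSet_Ioc
            intro t ht
            exact mul_le_mul (hVC t) (hB₀ q hq1.le hq2 t ht.1.le ht.2)
              (Real.rpow_nonneg (by linarith [ht.1]) _) ((hVnn t).trans (hVC t))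
        _ = C * B₀ * (t₀ - T) := by
            rw [setIntegral_const, measureReal_def, Real.volume_Ioc, smul_eq_mul,
              ENNReal.toReal_ofReal (by linarith)]
            ring
    -- bounds on I2
    have hmodel : IntegrableOn (fun t => t ^ (D - s - 1)) (Ioi t₀) volume :=
      integrableOn_Ioi_rpow_of_lt (by linarith) ht₀pos
    have hpt : ∀ t, t ∈ Ioi t₀ → t ^ ((N:ℝ) + D) * t ^ q = t ^ (D - s - 1) := by
      intro t ht
      rw [← Real.rpow_add (lt_trans ht₀pos ht), hq_def]
      ring_nf
    have hI2low : (M - η) * (t₀ ^ (D - s) / (s - D)) ≤ ∫ t in Ioi t₀, Vr t * t ^ q := by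
      rw [← htail s hs t₀ ht₀pos, ← integral_const_mul]
      apply setIntegral_mono_on (hmodel.const_mul _) hI2 measurableSet_Ioi
      intro t ht
      have htpos : 0 < t := lt_trans ht₀pos ht
      calc (M - η) * t ^ (D - s - 1) = ((M - η) * t ^ ((N:ℝ) + D)) * t ^ q := by
            rw [mul_assoc, hpt t ht]
        _ ≤ Vr t * t ^ q :=
            mul_le_mul_of_nonneg_right (hVb t (le_of_lt ht)).1 (Real.rpow_nonneg htpos.le _)
    have hI2up : ∫ t in Ioi t₀, Vr t * t ^ q ≤ (M + η) * (t₀ ^ (D - s) / (s - D)) := by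
      rw [← htail s hs t₀ ht₀pos, ← integral_const_mul]
      apply setIntegral_mono_on hI2 (hmodel.const_mul _) measurableSet_Ioi
      intro t ht
      have htpos : 0 < t := lt_trans ht₀pos ht
      calc Vr t * t ^ q ≤ ((M + η) * t ^ ((N:ℝ) + D)) * t ^ q :=
            mul_le_mul_of_nonneg_right (hVb t (le_of_lt ht)).2 (Real.rpow_nonneg htpos.le _)
        _ = (M + η) * t ^ (D - s - 1) := by rw [mul_assoc, hpt t ht]
    -- pow estimates
    have hpow_le1 : t₀ ^ (D - s) ≤ 1 :=
      Real.rpow_le_one_of_one_le_of_nonpos ht₀1.le (by linarith)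
    have hpow_ge : 1 - (s - D) * Real.log t₀ ≤ t₀ ^ (D - s) := by
      rw [Real.rpow_def_of_pos ht₀pos,
        show Real.log t₀ * (D - s) = (D - s) * Real.log t₀ from mul_comm _ _]
      have := Real.add_one_le_exp ((D - s) * Real.log t₀)
      linarith
    have hpow_nn : 0 ≤ t₀ ^ (D - s) := Real.rpow_nonneg ht₀pos.le _
    -- assemble
    set G := ∫ t in Ioi T, Vr t * t ^ q with hG_def
    have hup : (s - D) * G ≤ M + 2 * η := by
      have e1 : (s - D) * (C * B₀ * (t₀ - T)) ≤ η := by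
        have h0 : s - D ≤ η / (C * B₀ * (t₀ - T) + 1) := le_trans hsdlt.le hδ3
        have h1 : (s - D) * (C * B₀ * (t₀ - T)) ≤
            (η / (C * B₀ * (t₀ - T) + 1)) * (C * B₀ * (t₀ - T)) :=
          mul_le_mul_of_nonneg_right h0 hCB
        have h2 : (η / (C * B₀ * (t₀ - T) + 1)) * (C * B₀ * (t₀ - T)) ≤ η := by
          rw [div_mul_eq_mul_div, div_le_iff₀ (by linarith)]
          nlinarith
        exact h1.trans h2
      have e2 : (s - D) * ((M + η) * (t₀ ^ (D - s) / (s - D))) = (M + η) * t₀ ^ (D - s) := by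
        field_simp
      have := add_le_add (mul_le_mul_of_nonneg_left hI1le hsD.le)
        (mul_le_mul_of_nonneg_left hI2up hsD.le)
      rw [hsplit]
      rw [mul_add]
      calc (s - D) * (∫ t in Ioc T t₀, Vr t * t ^ q) + (s - D) * ∫ t in Ioi t₀, Vr t * t ^ q
          ≤ (s - D) * (C * B₀ * (t₀ - T)) + (s - D) * ((M + η) * (t₀ ^ (D - s) / (s - D))) := this
        _ = (s - D) * (C * B₀ * (t₀ - T)) + (M + η) * t₀ ^ (D - s) := by rw [e2]
        _ ≤ η + (M + η) * 1 := by
            refine add_le_add e1 ?_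
            exact mul_le_mul_of_nonneg_left hpow_le1 (by linarith)
        _ = M + 2 * η := by ring
    have hlow : M - 2 * η ≤ (s - D) * G := by
      have e2 : (s - D) * ((M - η) * (t₀ ^ (D - s) / (s - D))) = (M - η) * t₀ ^ (D - s) := by
        field_simp
      have hx : (s - D) * Real.log t₀ ≤ η / (M + 1) := by
        have h0 : s - D ≤ η / ((M + 1) * Real.log t₀ + 1) := le_trans hsdlt.le hδ2
        have h1 : (s - D) * Real.log t₀ ≤ (η / ((M + 1) * Real.log t₀ + 1)) * Real.log t₀ :=
          mul_le_mul_of_nonneg_right h0 hlog.le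
        have h2 : (η / ((M + 1) * Real.log t₀ + 1)) * Real.log t₀ ≤ η / (M + 1) := by
          rw [div_mul_eq_mul_div, div_le_div_iff₀ (by positivity) (by linarith)]
          nlinarith
        exact h1.trans h2
      have key : M - 2 * η ≤ (M - η) * t₀ ^ (D - s) := by
        have h5 : (M - η) * (1 - (s - D) * Real.log t₀) ≤ (M - η) * t₀ ^ (D - s) :=
          mul_le_mul_of_nonneg_left hpow_ge hMη
        have h6 : M - 2 * η ≤ (M - η) * (1 - (s - D) * Real.log t₀) := by
          have hx2 : 0 ≤ (s - D) * Real.log t₀ := mul_nonneg hsD.le hlog.le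
          have : (M - η) * ((s - D) * Real.log t₀) ≤ M * (η / (M + 1)) := by
            apply mul_le_mul (by linarith) hx hx2 hM.le
          have hMsmall : M * (η / (M + 1)) ≤ η := by
            rw [mul_div_assoc', div_le_iff₀ (by linarith)]
            nlinarith
          nlinarith
        linarith
      calc M - 2 * η ≤ (M - η) * t₀ ^ (D - s) := key
        _ = (s - D) * ((M - η) * (t₀ ^ (D - s) / (s - D))) := e2.symm
        _ ≤ (s - D) * ((∫ t in Ioc T t₀, Vr t * t ^ q) + ∫ t in Ioi t₀, Vr t * t ^ q) := by
            apply mul_le_mul_of_nonneg_left _ hsD.le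
            linarith
        _ = (s - D) * G := by rw [hsplit]
    rw [Real.dist_eq, abs_lt]
    constructor <;> [linarith; linarith]
  -- assemble everything
  have h1 : Tendsto (fun s : ℝ => (s - D) * ((volume A).toReal * T ^ (-s - (N:ℝ))))
      (𝓝[>] D) (𝓝 0) := by
    have hc : Continuous fun s : ℝ => (s - D) * ((volume A).toReal * T ^ (-s - (N:ℝ))) := by
      simp only [Real.rpow_def_of_pos hT]
      fun_prop
    have h' : Tendsto (fun s : ℝ => (s - D) * ((volume A).toReal * T ^ (-s - (N:ℝ))))
        (𝓝[>] D) (𝓝 ((D - D) * ((volume A).toReal * T ^ (-D - (N:ℝ))))) :=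
      (hc.tendsto D).mono_left nhdsWithin_le_nhds
    simpa using h'
  have h2 : Tendsto (fun s : ℝ => -s - (N:ℝ)) (𝓝[>] D) (𝓝 (-D - (N:ℝ))) := by
    have hc : Continuous fun s : ℝ => -s - (N:ℝ) := by fun_prop
    exact (hc.tendsto D).mono_left nhdsWithin_le_nhds
  have hcomb := h1.add (h2.mul h3)
  rw [zero_add] at hcomb
  have hfinal : Tendsto (fun s : ℝ =>
      (s - D) * ((volume A).toReal * T ^ (-s - (N:ℝ)))
        + (-s - (N:ℝ)) * ((s - D) * ∫ t in Ioi T, Vr t * t ^ (-s - (N:ℝ) - 1)))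
      (𝓝[>] D) (𝓝 (-((N:ℝ) + D) * M)) := by
    convert hcomb using 2
    ring
  apply hfinal.congr'
  filter_upwards [Ioo_mem_nhdsGT (show D < -(N:ℝ) from hDN)] with s hs
  rw [hzeta s hs]
  ring
end
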